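/- arXiv:1501.05929 — 2 statements merged into one kernel-verified Lean document; each statement's English description precedes it below -/
import Mathlib

section
/- Spectral profile lower bound from heat kernel (Coulhon): for any symmetric probability measure φ on a countable group G and any v ≥ 1, Λ_φ(v) ≥ sup_{t>0} (1/(2t))·log(1/(v·h_t^φ(e))), where h_t^φ is the continuous time kernel and Λ_φ is the L² spectral profile. -/
open scoped BigOperators

/-- A symmetric probability measure on a group. -/
def IsSymProb {G : Type*} [Group G] (φ : G → ℝ) : Prop :=
  (∀ x, 0 ≤ φ x) ∧ (∑' x, φ x) = 1 ∧ ∀ x, φ x⁻¹ = φ x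

/-- Convolution of two measures on a group. -/
noncomputable def convolve {G : Type*} [Group G] (μ ν : G → ℝ) : G → ℝ :=
  fun x => ∑' y : G, μ y * ν (y⁻¹ * x)

open Classical in
/-- Convolution powers `μ^{(n)}` (with `μ^{(0)} = δ_e`). -/
noncomputable def convPow {G : Type*} [Group G] (μ : G → ℝ) : ℕ → G → ℝ
  | 0 => fun x => if x = 1 then 1 else 0
  | n + 1 => convolve μ (convPow μ n)

/-- The Dirichlet form `E_φ(f,f)`. -/
noncomputable def dirichletE {G : Type*} [Group G] (φ : G → ℝ) (f : G → ℝ) : ℝ :=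
  (1 / 2) * ∑' x : G, ∑' y : G, (f (x * y) - f x) ^ 2 * φ y

namespace Coulhon

lemma summable_of_abs_le {α : Type*} {f g : α → ℝ} (h : ∀ a, |f a| ≤ g a) (hg : Summable g) :
    Summable f :=
  summable_abs_iff.mp (hg.of_nonneg_of_le (fun _ => abs_nonneg _) h)

/-- Nonnegative Fubini package. -/
lemma nn_fubini {α β : Type*} {F : α → β → ℝ} (h0 : ∀ a b, 0 ≤ F a b)
    (hrow : ∀ a, Summable (F a)) (hs : Summable fun a => ∑' b, F a b) :
    (∀ b, Summable fun a => F a b) ∧ (Summable fun b => ∑' a, F a b) ∧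
      (∑' a, ∑' b, F a b) = ∑' b, ∑' a, F a b := by
  have hu : Summable (Function.uncurry F) :=
    (summable_prod_of_nonneg fun p => h0 p.1 p.2).2 ⟨hrow, hs⟩
  have hu' : Summable fun p : β × α => F p.2 p.1 :=
    (Equiv.prodComm β α).summable_iff.mpr hu
  have hcol := (summable_prod_of_nonneg (f := fun p : β × α => F p.2 p.1)
    (fun p => h0 p.2 p.1)).1 hu'
  exact ⟨hcol.1, hcol.2, (Summable.tsum_comm' hu hrow hcol.1).symm⟩

section Group

variable {G : Type*} [Group G] [Countable G]

lemma summable_phi {φ : G → ℝ} (h1 : (∑' x, φ x) = 1) : Summable φ := by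
  by_contra h
  rw [tsum_eq_zero_of_not_summable h] at h1
  norm_num at h1

lemma convPow_nonneg {φ : G → ℝ} (hpos : ∀ x, 0 ≤ φ x) : ∀ (k : ℕ) (x : G), 0 ≤ convPow φ k x := by
  intro k
  induction k with
  | zero => intro x; simp only [convPow]; split <;> norm_num
  | succ n ih =>
      intro x
      exact tsum_nonneg fun y => mul_nonneg (hpos y) (ih _)

lemma convPow_hasSum {φ : G → ℝ} (hpos : ∀ x, 0 ≤ φ x) (h1 : (∑' x, φ x) = 1) :
    ∀ k : ℕ, HasSum (convPow φ k) 1 := by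
  intro k
  induction k with
  | zero =>
      classical
      have hE : (convPow φ (0:ℕ) : G → ℝ) = fun x => if x = 1 then 1 else 0 := by
        funext x
        by_cases h : x = 1 <;> simp [convPow, h]
      rw [hE]
      exact hasSum_ite_eq (1 : G) (1 : ℝ)
  | succ n ih =>
      have hν0 : ∀ x, 0 ≤ convPow φ n x := convPow_nonneg hpos n
      have hνs : Summable (convPow φ n) := ih.summable
      have hrow : ∀ y : G, Summable fun x => φ y * convPow φ n (y⁻¹ * x) := fun y =>
        ((hνs.comp_injective (mul_right_injective y⁻¹))).mul_left (φ y)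
      have hrowsum : ∀ y : G, (∑' x, φ y * convPow φ n (y⁻¹ * x)) = φ y := by
        intro y
        rw [tsum_mul_left]
        have : (∑' x, convPow φ n (y⁻¹ * x)) = ∑' x, convPow φ n x :=
          (Equiv.mulLeft y⁻¹).tsum_eq (convPow φ n)
        rw [this, ih.tsum_eq, mul_one]
      have hs : Summable fun y => ∑' x, φ y * convPow φ n (y⁻¹ * x) :=
        Summable.congr (summable_phi h1) fun y => (hrowsum y).symm
      obtain ⟨hcol, hcolsum, hcomm⟩ := nn_fubini
        (F := fun y x => φ y * convPow φ n (y⁻¹ * x))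
        (fun y x => mul_nonneg (hpos y) (hν0 _)) hrow hs
      have htsum : (∑' x : G, ∑' y : G, φ y * convPow φ n (y⁻¹ * x)) = 1 := by
        rw [← hcomm, tsum_congr hrowsum, h1]
      exact (Summable.hasSum_iff hcolsum).mpr htsum

lemma convPow_le_one {φ : G → ℝ} (hpos : ∀ x, 0 ≤ φ x) (h1 : (∑' x, φ x) = 1) (k : ℕ) (z : G) :
    convPow φ k z ≤ 1 :=
  le_hasSum (convPow_hasSum hpos h1 k) z fun j _ => convPow_nonneg hpos k j

omit [Countable G] in
lemma convolve_delta_right (φ μ : G → ℝ) :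
    convolve μ (convPow φ 0) = μ := by
  funext x
  simp only [convolve, convPow]
  rw [tsum_eq_single x]
  · simp
  · intro y hy
    rw [if_neg fun h => hy (inv_mul_eq_one.mp h), mul_zero]

omit [Countable G] in
lemma convolve_delta_left (φ ν : G → ℝ) :
    convolve (convPow φ 0) ν = ν := by
  funext x
  simp only [convolve, convPow]
  rw [tsum_eq_single 1]
  · simp
  · intro y hy
    rw [if_neg hy, zero_mul]

omit [Countable G] in
lemma convPow_one_eq (φ : G → ℝ) : convPow φ 1 = φ := convolve_delta_right φ φ

end Group

section Group2
variable {G : Type*} [Group G] [Countable G]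

/-- Associativity of convolution for nonnegative mass-one kernels. -/
lemma convolve_assoc {μ ν ρ : G → ℝ}
    (hμ0 : ∀ x, 0 ≤ μ x) (hν0 : ∀ x, 0 ≤ ν x) (hρ0 : ∀ x, 0 ≤ ρ x)
    (hμ : HasSum μ 1) (hν : HasSum ν 1) (hρ : HasSum ρ 1)
    (hν1 : ∀ x, ν x ≤ 1) :
    convolve (convolve μ ν) ρ = convolve μ (convolve ν ρ) := by
  funext x
  simp only [convolve]
  -- LHS = ∑' y, (∑' w, μ w * ν (w⁻¹ * y)) * ρ (y⁻¹ * x)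
  have step1 : ∀ y : G, (∑' w, μ w * ν (w⁻¹ * y)) * ρ (y⁻¹ * x)
      = ∑' w, μ w * ν (w⁻¹ * y) * ρ (y⁻¹ * x) := fun y => (tsum_mul_right).symm
  rw [tsum_congr step1]
  -- Fubini swap (y outer, w inner) → (w outer, y inner)
  have h0 : ∀ (y w : G), 0 ≤ μ w * ν (w⁻¹ * y) * ρ (y⁻¹ * x) := fun y w =>
    mul_nonneg (mul_nonneg (hμ0 _) (hν0 _)) (hρ0 _)
  have hrow : ∀ y : G, Summable fun w => μ w * ν (w⁻¹ * y) * ρ (y⁻¹ * x) := by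
    intro y
    apply summable_of_abs_le (g := fun w => μ w * ρ (y⁻¹ * x))
    · intro w
      rw [abs_of_nonneg (h0 y w)]
      calc μ w * ν (w⁻¹ * y) * ρ (y⁻¹ * x) ≤ μ w * 1 * ρ (y⁻¹ * x) := by
            apply mul_le_mul_of_nonneg_right _ (hρ0 _)
            exact mul_le_mul_of_nonneg_left (hν1 _) (hμ0 _)
        _ = μ w * ρ (y⁻¹ * x) := by ring
    · exact hμ.summable.mul_right _
  have hrowsum : Summable fun y => ∑' w, μ w * ν (w⁻¹ * y) * ρ (y⁻¹ * x) := by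
    apply summable_of_abs_le (g := fun y => ρ (y⁻¹ * x))
    · intro y
      rw [abs_of_nonneg (tsum_nonneg (h0 y))]
      have hle : ∀ w, μ w * ν (w⁻¹ * y) * ρ (y⁻¹ * x) ≤ μ w * ρ (y⁻¹ * x) := by
        intro w
        calc μ w * ν (w⁻¹ * y) * ρ (y⁻¹ * x) ≤ μ w * 1 * ρ (y⁻¹ * x) := by
              apply mul_le_mul_of_nonneg_right _ (hρ0 _)
              exact mul_le_mul_of_nonneg_left (hν1 _) (hμ0 _)
          _ = μ w * ρ (y⁻¹ * x) := by ring
      calc (∑' w, μ w * ν (w⁻¹ * y) * ρ (y⁻¹ * x)) ≤ ∑' w, μ w * ρ (y⁻¹ * x) :=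
            Summable.tsum_le_tsum hle (hrow y) (hμ.summable.mul_right _)
        _ = 1 * ρ (y⁻¹ * x) := by rw [tsum_mul_right, hμ.tsum_eq]
        _ = ρ (y⁻¹ * x) := one_mul _
    · exact (hρ.summable.comp_injective
        (show Function.Injective (fun y : G => y⁻¹ * x) from fun a b h => by
          have := mul_right_cancel (a := a⁻¹) (b := x) (c := b⁻¹) h
          exact inv_injective this))
  obtain ⟨_, _, hcomm⟩ := nn_fubini h0 hrow hrowsum
  rw [hcomm]
  -- now ∑' w, ∑' y, μ w * ν (w⁻¹ y) * ρ (y⁻¹ x) = ∑' w, μ w * ∑' u, ν u * ρ (u⁻¹ (w⁻¹ x))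
  apply tsum_congr
  intro w
  have : ∀ y : G, μ w * ν (w⁻¹ * y) * ρ (y⁻¹ * x) = μ w * (ν (w⁻¹ * y) * ρ (y⁻¹ * x)) :=
    fun y => by ring
  rw [tsum_congr this, tsum_mul_left]
  congr 1
  -- reindex y = w * u
  have := (Equiv.mulLeft w).tsum_eq (fun y => ν (w⁻¹ * y) * ρ (y⁻¹ * x))
  simp only [Equiv.coe_mulLeft] at this
  rw [← this]
  apply tsum_congr
  intro u
  have e1 : w⁻¹ * (w * u) = u := by group
  have e2 : (w * u)⁻¹ * x = u⁻¹ * (w⁻¹ * x) := by group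
  rw [e1, e2]

lemma convPow_add {φ : G → ℝ} (hpos : ∀ x, 0 ≤ φ x) (h1 : (∑' x, φ x) = 1) :
    ∀ j m : ℕ, convolve (convPow φ j) (convPow φ m) = convPow φ (j + m) := by
  intro j
  induction j with
  | zero => intro m; rw [convolve_delta_left, Nat.zero_add]
  | succ n ih =>
      intro m
      have hassoc := convolve_assoc (μ := φ) (ν := convPow φ n) (ρ := convPow φ m)
        hpos (convPow_nonneg hpos n) (convPow_nonneg hpos m)
        ((Summable.hasSum_iff (summable_phi h1)).mpr h1)
        (convPow_hasSum hpos h1 n) (convPow_hasSum hpos h1 m)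
        (convPow_le_one hpos h1 n)
      show convolve (convolve φ (convPow φ n)) (convPow φ m) = _
      rw [hassoc, ih m]
      show convolve φ (convPow φ (n + m)) = convPow φ (n + 1 + m)
      rw [show n + 1 + m = (n + m) + 1 by omega]
      rfl

lemma convPow_symm {φ : G → ℝ} (hpos : ∀ x, 0 ≤ φ x) (h1 : (∑' x, φ x) = 1)
    (hsym : ∀ x, φ x⁻¹ = φ x) :
    ∀ (k : ℕ) (x : G), convPow φ k x⁻¹ = convPow φ k x := by
  intro k
  induction k with
  | zero =>
      intro x
      classical
      by_cases h : x = 1 <;> simp [convPow, h, inv_eq_one]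
  | succ n ih =>
      intro x
      show convolve φ (convPow φ n) x⁻¹ = convolve φ (convPow φ n) x
      have key : convolve φ (convPow φ n) x⁻¹ = convolve (convPow φ n) φ x := by
        simp only [convolve]
        -- reindex y ↦ z⁻¹
        have e1 := (Equiv.inv G).tsum_eq (fun y => φ y * convPow φ n (y⁻¹ * x⁻¹))
        simp only [Equiv.inv_apply] at e1
        rw [← e1]
        -- now: ∑' z, φ z⁻¹ * convPow φ n (z * x⁻¹)
        have congr1 : ∀ z : G, φ z⁻¹ * convPow φ n ((z⁻¹)⁻¹ * x⁻¹)
            = φ z * convPow φ n (x * z⁻¹)⁻¹ := by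
          intro z
          rw [hsym]
          congr 2
          group
        rw [tsum_congr congr1]
        have congr2 : ∀ z : G, φ z * convPow φ n (x * z⁻¹)⁻¹
            = φ z * convPow φ n (x * z⁻¹) := fun z => by rw [ih]
        rw [tsum_congr congr2]
        -- reindex z = e u where e u = u⁻¹ * x ; then x * (e u)⁻¹ = u
        have e2 := ((Equiv.inv G).trans (Equiv.mulRight x)).tsum_eq
          (fun z => φ z * convPow φ n (x * z⁻¹))
        simp only [Equiv.trans_apply, Equiv.inv_apply, Equiv.coe_mulRight] at e2
        rw [← e2]
        apply tsum_congr
        intro u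
        have e3 : x * (u⁻¹ * x)⁻¹ = u := by group
        rw [e3]
        ring
      rw [key]
      have h2 : convolve (convPow φ n) φ x = convolve (convPow φ n) (convPow φ 1) x := by
        rw [convPow_one_eq]
      rw [h2]
      have h3 := convPow_add hpos h1 n 1
      rw [h3]
      rfl

end Group2
section Heat
variable {G : Type*} [Group G] [Countable G]

/-- The heat kernel as a function on the group. -/
noncomputable def hkF (φ : G → ℝ) (t : ℝ) (z : G) : ℝ :=
  Real.exp (-t) * ∑' k : ℕ, t ^ k / (Nat.factorial k : ℝ) * convPow φ k z

lemma coef_nonneg {t : ℝ} (ht : 0 ≤ t) (k : ℕ) : 0 ≤ t ^ k / (Nat.factorial k : ℝ) :=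
  div_nonneg (pow_nonneg ht k) (Nat.cast_nonneg _)

lemma coef_summable (t : ℝ) : Summable (fun k : ℕ => t ^ k / (Nat.factorial k : ℝ)) :=
  Real.summable_pow_div_factorial t

lemma coef_tsum (t : ℝ) : (∑' k : ℕ, t ^ k / (Nat.factorial k : ℝ)) = Real.exp t := by
  rw [Real.exp_eq_exp_ℝ, NormedSpace.exp_eq_tsum_div]

variable {φ : G → ℝ}

lemma inner_summable (hpos : ∀ x, 0 ≤ φ x) (h1 : (∑' x, φ x) = 1) {t : ℝ} (ht : 0 ≤ t) (z : G) :
    Summable (fun k : ℕ => t ^ k / (Nat.factorial k : ℝ) * convPow φ k z) := by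
  apply summable_of_abs_le (g := fun k => t ^ k / (Nat.factorial k : ℝ)) _ (coef_summable t)
  intro k
  rw [abs_of_nonneg (mul_nonneg (coef_nonneg ht k) (convPow_nonneg hpos k z))]
  calc t ^ k / (Nat.factorial k : ℝ) * convPow φ k z
      ≤ t ^ k / (Nat.factorial k : ℝ) * 1 :=
        mul_le_mul_of_nonneg_left (convPow_le_one hpos h1 k z) (coef_nonneg ht k)
    _ = _ := mul_one _

lemma hk_nonneg (hpos : ∀ x, 0 ≤ φ x) {t : ℝ} (ht : 0 ≤ t) (z : G) : 0 ≤ hkF φ t z :=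
  mul_nonneg (Real.exp_nonneg _)
    (tsum_nonneg fun k => mul_nonneg (coef_nonneg ht k) (convPow_nonneg hpos k z))

lemma hk_le_one (hpos : ∀ x, 0 ≤ φ x) (h1 : (∑' x, φ x) = 1) {t : ℝ} (ht : 0 ≤ t) (z : G) :
    hkF φ t z ≤ 1 := by
  have hle : (∑' k : ℕ, t ^ k / (Nat.factorial k : ℝ) * convPow φ k z)
      ≤ ∑' k : ℕ, t ^ k / (Nat.factorial k : ℝ) := by
    apply Summable.tsum_le_tsum _ (inner_summable hpos h1 ht z) (coef_summable t)
    intro k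
    calc t ^ k / (Nat.factorial k : ℝ) * convPow φ k z
        ≤ t ^ k / (Nat.factorial k : ℝ) * 1 :=
          mul_le_mul_of_nonneg_left (convPow_le_one hpos h1 k z) (coef_nonneg ht k)
      _ = _ := mul_one _
  calc hkF φ t z ≤ Real.exp (-t) * Real.exp t := by
        apply mul_le_mul_of_nonneg_left _ (Real.exp_nonneg _)
        rw [← coef_tsum t]; exact hle
    _ = 1 := by rw [← Real.exp_add]; simp

lemma hk_mass (hpos : ∀ x, 0 ≤ φ x) (h1 : (∑' x, φ x) = 1) {t : ℝ} (ht : 0 ≤ t) :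
    Summable (hkF φ t) ∧ (∑' z, hkF φ t z) = 1 := by
  have h0 : ∀ (k : ℕ) (z : G), 0 ≤ t ^ k / (Nat.factorial k : ℝ) * convPow φ k z :=
    fun k z => mul_nonneg (coef_nonneg ht k) (convPow_nonneg hpos k z)
  have hrow : ∀ k : ℕ, Summable fun z : G => t ^ k / (Nat.factorial k : ℝ) * convPow φ k z :=
    fun k => ((convPow_hasSum hpos h1 k).summable).mul_left _
  have hrowsum : ∀ k : ℕ, (∑' z : G, t ^ k / (Nat.factorial k : ℝ) * convPow φ k z)
      = t ^ k / (Nat.factorial k : ℝ) := by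
    intro k
    rw [tsum_mul_left, (convPow_hasSum hpos h1 k).tsum_eq, mul_one]
  have hs : Summable fun k : ℕ => ∑' z : G, t ^ k / (Nat.factorial k : ℝ) * convPow φ k z :=
    Summable.congr (coef_summable t) fun k => (hrowsum k).symm
  obtain ⟨hcol, hcolsum, hcomm⟩ := nn_fubini h0 hrow hs
  constructor
  · exact hcolsum.mul_left _
  · have : (∑' z : G, ∑' k : ℕ, t ^ k / (Nat.factorial k : ℝ) * convPow φ k z)
        = Real.exp t := by
      rw [← hcomm, tsum_congr hrowsum, coef_tsum]
    simp only [hkF]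
    rw [tsum_mul_left, this, ← Real.exp_add]
    simp

lemma hk_symm (hpos : ∀ x, 0 ≤ φ x) (h1 : (∑' x, φ x) = 1) (hsym : ∀ x, φ x⁻¹ = φ x)
    (t : ℝ) (z : G) : hkF φ t z⁻¹ = hkF φ t z := by
  simp only [hkF]
  congr 1
  exact tsum_congr fun k => by rw [convPow_symm hpos h1 hsym k z]

set_option maxHeartbeats 2000000 in
/-- The semigroup property of the heat kernel. -/
lemma hk_conv (hpos : ∀ x, 0 ≤ φ x) (h1 : (∑' x, φ x) = 1)
    {s u : ℝ} (hs : 0 ≤ s) (hu : 0 ≤ u) (z : G) :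
    (∑' w : G, hkF φ s w * hkF φ u (w⁻¹ * z)) = hkF φ (s + u) z := by
  classical
  set c : ℕ → ℝ := fun k => s ^ k / (Nat.factorial k : ℝ) with hc
  set d : ℕ → ℝ := fun m => u ^ m / (Nat.factorial m : ℝ) with hd
  set P : ℕ → G → ℝ := fun k => convPow φ k with hP
  set A : G → ℝ := fun w => ∑' k, c k * P k w with hA
  set B : G → ℝ := fun w => ∑' m, d m * P m w with hB
  have hA0 : ∀ w, 0 ≤ A w := fun w => tsum_nonneg fun k =>
    mul_nonneg (coef_nonneg hs k) (convPow_nonneg hpos k w)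
  have hAsum : ∀ w, Summable fun k => c k * P k w := fun w => inner_summable hpos h1 hs w
  have hBsum : ∀ w, Summable fun m => d m * P m w := fun w => inner_summable hpos h1 hu w
  have hBle : ∀ w, B w ≤ Real.exp u := by
    intro w
    rw [← coef_tsum u]
    apply Summable.tsum_le_tsum _ (hBsum w) (coef_summable u)
    intro m
    calc d m * P m w ≤ d m * 1 :=
          mul_le_mul_of_nonneg_left (convPow_le_one hpos h1 m w) (coef_nonneg hu m)
      _ = d m := mul_one _
  -- step 1 : pointwise product expansion
  have step1 : ∀ w : G, hkF φ s w * hkF φ u (w⁻¹ * z)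
      = Real.exp (-s) * Real.exp (-u) *
        ∑' p : ℕ × ℕ, (c p.1 * P p.1 w) * (d p.2 * P p.2 (w⁻¹ * z)) := by
    intro w
    have hnormf : Summable fun k => ‖c k * P k w‖ := by
      apply Summable.congr (hAsum w)
      intro k
      rw [Real.norm_eq_abs, abs_of_nonneg (mul_nonneg (coef_nonneg hs k) (convPow_nonneg hpos k w))]
    have hnormg : Summable fun m => ‖d m * P m (w⁻¹ * z)‖ := by
      apply Summable.congr (hBsum (w⁻¹ * z))
      intro m
      rw [Real.norm_eq_abs,
        abs_of_nonneg (mul_nonneg (coef_nonneg hu m) (convPow_nonneg hpos m _))]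
    have hmul := tsum_mul_tsum_of_summable_norm hnormf hnormg
    have eA : hkF φ s w = Real.exp (-s) * A w := rfl
    have eB : hkF φ u (w⁻¹ * z) = Real.exp (-u) * B (w⁻¹ * z) := rfl
    rw [eA, eB, show Real.exp (-s) * A w * (Real.exp (-u) * B (w⁻¹ * z))
        = Real.exp (-s) * Real.exp (-u) * (A w * B (w⁻¹ * z)) by ring, ← hmul]
  rw [tsum_congr step1, tsum_mul_left]
  -- step 2 : Fubini swap w ↔ p
  have h0 : ∀ (w : G) (p : ℕ × ℕ), 0 ≤ (c p.1 * P p.1 w) * (d p.2 * P p.2 (w⁻¹ * z)) :=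
    fun w p => mul_nonneg (mul_nonneg (coef_nonneg hs _) (convPow_nonneg hpos _ _))
      (mul_nonneg (coef_nonneg hu _) (convPow_nonneg hpos _ _))
  have hrow : ∀ w : G, Summable fun p : ℕ × ℕ =>
      (c p.1 * P p.1 w) * (d p.2 * P p.2 (w⁻¹ * z)) := by
    intro w
    exact Summable.mul_of_nonneg (hAsum w) (hBsum (w⁻¹ * z))
      (fun k => mul_nonneg (coef_nonneg hs k) (convPow_nonneg hpos k w))
      (fun m => mul_nonneg (coef_nonneg hu m) (convPow_nonneg hpos m _))
  have hrowsum : ∀ w : G, (∑' p : ℕ × ℕ, (c p.1 * P p.1 w) * (d p.2 * P p.2 (w⁻¹ * z)))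
      = A w * B (w⁻¹ * z) := by
    intro w
    have hnormf : Summable fun k => ‖c k * P k w‖ := by
      apply Summable.congr (hAsum w)
      intro k
      rw [Real.norm_eq_abs, abs_of_nonneg (mul_nonneg (coef_nonneg hs k) (convPow_nonneg hpos k w))]
    have hnormg : Summable fun m => ‖d m * P m (w⁻¹ * z)‖ := by
      apply Summable.congr (hBsum (w⁻¹ * z))
      intro m
      rw [Real.norm_eq_abs,
        abs_of_nonneg (mul_nonneg (coef_nonneg hu m) (convPow_nonneg hpos m _))]
    exact (tsum_mul_tsum_of_summable_norm hnormf hnormg).symm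
  have hAmass : Summable A := by
    have := hk_mass hpos h1 hs
    have hsummable : Summable (hkF φ s) := this.1
    have : Summable fun w => Real.exp s * hkF φ s w := hsummable.mul_left _
    apply Summable.congr this
    intro w
    show Real.exp s * (Real.exp (-s) * A w) = A w
    rw [← mul_assoc, ← Real.exp_add]
    simp
  have hsrows : Summable fun w : G =>
      ∑' p : ℕ × ℕ, (c p.1 * P p.1 w) * (d p.2 * P p.2 (w⁻¹ * z)) := by
    apply summable_of_abs_le (g := fun w => A w * Real.exp u) _ (hAmass.mul_right _)
    intro w
    rw [hrowsum w, abs_of_nonneg (mul_nonneg (hA0 w) (tsum_nonneg fun m =>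
      mul_nonneg (coef_nonneg hu m) (convPow_nonneg hpos m _)))]
    exact mul_le_mul_of_nonneg_left (hBle _) (hA0 w)
  obtain ⟨hcol, hcolsum, hcomm⟩ := nn_fubini h0 hrow hsrows
  rw [hcomm]
  -- step 3 : inner sum via convPow_add
  have step3 : ∀ p : ℕ × ℕ, (∑' w : G, (c p.1 * P p.1 w) * (d p.2 * P p.2 (w⁻¹ * z)))
      = (c p.1 * d p.2) * P (p.1 + p.2) z := by
    intro p
    have hrearr : ∀ w : G, (c p.1 * P p.1 w) * (d p.2 * P p.2 (w⁻¹ * z))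
        = (c p.1 * d p.2) * (P p.1 w * P p.2 (w⁻¹ * z)) := fun w => by ring
    rw [tsum_congr hrearr, tsum_mul_left]
    congr 1
    have := convPow_add hpos h1 p.1 p.2
    have := congrFun this z
    simpa only [convolve] using this
  rw [tsum_congr step3]
  -- step 4 : antidiagonal reorganization
  have hsummable4 : Summable fun p : ℕ × ℕ => (c p.1 * d p.2) * P (p.1 + p.2) z := by
    apply summable_of_abs_le (g := fun p : ℕ × ℕ => c p.1 * d p.2)
    · intro p
      rw [abs_of_nonneg (mul_nonneg (mul_nonneg (coef_nonneg hs _) (coef_nonneg hu _))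
        (convPow_nonneg hpos _ _))]
      calc (c p.1 * d p.2) * P (p.1 + p.2) z ≤ (c p.1 * d p.2) * 1 :=
            mul_le_mul_of_nonneg_left (convPow_le_one hpos h1 _ _)
              (mul_nonneg (coef_nonneg hs _) (coef_nonneg hu _))
        _ = c p.1 * d p.2 := mul_one _
    · exact Summable.mul_of_nonneg (coef_summable s) (coef_summable u)
        (fun k => coef_nonneg hs k) (fun m => coef_nonneg hu m)
  have step4 : (∑' p : ℕ × ℕ, (c p.1 * d p.2) * P (p.1 + p.2) z)
      = ∑' n : ℕ, (s + u) ^ n / (Nat.factorial n : ℝ) * P n z := by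
    set g : ℕ × ℕ → ℝ := fun p => (c p.1 * d p.2) * P (p.1 + p.2) z with hg
    have he := (Finset.HasAntidiagonal.sigmaAntidiagonalEquivProd (A := ℕ)).tsum_eq g
    rw [← he]
    have hgs : Summable (g ∘ Finset.HasAntidiagonal.sigmaAntidiagonalEquivProd (A := ℕ)) :=
      (Equiv.summable_iff _).mpr hsummable4
    have h2 := Summable.tsum_sigma (f := fun σ : (n : ℕ) × {x // x ∈ Finset.HasAntidiagonal.antidiagonal n} =>
      g (Finset.HasAntidiagonal.sigmaAntidiagonalEquivProd σ)) hgs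
    rw [h2]
    apply tsum_congr
    intro n
    have h3 : (∑' q : {x // x ∈ Finset.HasAntidiagonal.antidiagonal n},
        g (Finset.HasAntidiagonal.sigmaAntidiagonalEquivProd ⟨n, q⟩))
        = ∑' q : {x // x ∈ Finset.HasAntidiagonal.antidiagonal n}, g q.val := tsum_congr fun q => rfl
    rw [h3]
    rw [Finset.tsum_subtype (Finset.HasAntidiagonal.antidiagonal n) g]
    -- finite antidiagonal sum = binomial
    have hterm : ∀ q ∈ Finset.HasAntidiagonal.antidiagonal n, g q = (c q.1 * d q.2) * P n z := by
      intro q hq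
      rw [Finset.HasAntidiagonal.mem_antidiagonal] at hq
      simp only [hg, hq]
    rw [Finset.sum_congr rfl hterm, ← Finset.sum_mul]
    congr 1
    -- ∑_{q ∈ antidiagonal n} c q.1 * d q.2 = (s+u)^n / n!
    rw [Finset.Nat.sum_antidiagonal_eq_sum_range_succ_mk]
    rw [add_pow, Finset.sum_div]
    apply Finset.sum_congr rfl
    intro k hk
    rw [Finset.mem_range] at hk
    have hkn : k ≤ n := Nat.lt_succ_iff.mp hk
    have hfac : (n.choose k : ℝ) * ((Nat.factorial k : ℝ) * (Nat.factorial (n - k) : ℝ))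
        = (Nat.factorial n : ℝ) := by
      have := Nat.choose_mul_factorial_mul_factorial hkn
      push_cast [← this]
      ring
    have hk0 : (Nat.factorial k : ℝ) ≠ 0 := Nat.cast_ne_zero.mpr (Nat.factorial_ne_zero k)
    have hnk0 : (Nat.factorial (n - k) : ℝ) ≠ 0 := Nat.cast_ne_zero.mpr (Nat.factorial_ne_zero _)
    have hn0 : (Nat.factorial n : ℝ) ≠ 0 := Nat.cast_ne_zero.mpr (Nat.factorial_ne_zero n)
    show c k * d (n - k) = s ^ k * u ^ (n - k) * (n.choose k : ℝ) / (Nat.factorial n : ℝ)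
    simp only [hc, hd]
    field_simp
    rw [← hfac]
    ring
  rw [step4]
  simp only [hkF]
  rw [← Real.exp_add]
  congr 1
  ring

end Heat
section CS
variable {G : Type*} [Group G] [Countable G]

/-- Cauchy–Schwarz for nonnegative tsums. -/
lemma tsum_cs {α : Type*} {g h : α → ℝ} (hg0 : ∀ x, 0 ≤ g x) (hh0 : ∀ x, 0 ≤ h x)
    (hg2 : Summable fun x => g x ^ 2) (hh2 : Summable fun x => h x ^ 2) :
    (∑' x, g x * h x) ≤ Real.sqrt (∑' x, g x ^ 2) * Real.sqrt (∑' x, h x ^ 2) := by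
  have hgh : Summable fun x => g x * h x := by
    apply summable_of_abs_le (g := fun x => (g x ^ 2 + h x ^ 2) / 2)
    · intro x
      rw [abs_of_nonneg (mul_nonneg (hg0 x) (hh0 x))]
      nlinarith [sq_nonneg (g x - h x)]
    · exact (hg2.add hh2).div_const 2
  apply Summable.tsum_le_of_sum_le hgh
  intro S
  have h4 := Finset.sum_mul_sq_le_sq_mul_sq S g h
  have h5 : (∑ x ∈ S, g x * h x) ≤ Real.sqrt (∑ x ∈ S, g x ^ 2) * Real.sqrt (∑ x ∈ S, h x ^ 2) := by
    have hnn : 0 ≤ ∑ x ∈ S, g x * h x :=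
      Finset.sum_nonneg fun x _ => mul_nonneg (hg0 x) (hh0 x)
    calc (∑ x ∈ S, g x * h x) = Real.sqrt ((∑ x ∈ S, g x * h x) ^ 2) := (Real.sqrt_sq hnn).symm
      _ ≤ Real.sqrt ((∑ x ∈ S, g x ^ 2) * ∑ x ∈ S, h x ^ 2) := Real.sqrt_le_sqrt h4
      _ = Real.sqrt (∑ x ∈ S, g x ^ 2) * Real.sqrt (∑ x ∈ S, h x ^ 2) :=
          Real.sqrt_mul (Finset.sum_nonneg fun x _ => sq_nonneg _) _
  refine h5.trans (mul_le_mul ?_ ?_ (Real.sqrt_nonneg _) (Real.sqrt_nonneg _))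
  · exact Real.sqrt_le_sqrt (Summable.sum_le_tsum S (fun x _ => sq_nonneg _) hg2)
  · exact Real.sqrt_le_sqrt (Summable.sum_le_tsum S (fun x _ => sq_nonneg _) hh2)

variable {φ : G → ℝ}

lemma hk_sq_summable (hpos : ∀ x, 0 ≤ φ x) (h1 : (∑' x, φ x) = 1) {s : ℝ} (hs : 0 ≤ s) :
    Summable fun w : G => hkF φ s w ^ 2 := by
  apply Summable.of_nonneg_of_le (fun w => sq_nonneg _) _ (hk_mass hpos h1 hs).1
  intro w
  calc hkF φ s w ^ 2 = hkF φ s w * hkF φ s w := sq (hkF φ s w) ▸ by ring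
    _ ≤ 1 * hkF φ s w :=
        mul_le_mul_of_nonneg_right (hk_le_one hpos h1 hs w) (hk_nonneg hpos hs w)
    _ = hkF φ s w := one_mul _

/-- The heat kernel is maximized at the identity. -/
lemma hk_center (hpos : ∀ x, 0 ≤ φ x) (h1 : (∑' x, φ x) = 1) (hsym : ∀ x, φ x⁻¹ = φ x)
    {t : ℝ} (ht : 0 ≤ t) (z : G) : hkF φ t z ≤ hkF φ t 1 := by
  set s := t / 2 with hsdef
  have hs : 0 ≤ s := by positivity
  have hss : s + s = t := by rw [hsdef]; ring
  have key1 : (∑' w : G, hkF φ s w * hkF φ s (w⁻¹ * z)) = hkF φ t z := by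
    rw [hk_conv hpos h1 hs hs z, hss]
  have key2 : (∑' w : G, hkF φ s w ^ 2) = hkF φ t 1 := by
    rw [← hss, ← hk_conv hpos h1 hs hs 1]
    apply tsum_congr
    intro w
    rw [mul_one, hk_symm hpos h1 hsym s w]
    ring
  have key3 : (∑' w : G, hkF φ s (w⁻¹ * z) ^ 2) = ∑' w : G, hkF φ s w ^ 2 := by
    have := ((Equiv.inv G).trans (Equiv.mulRight z)).tsum_eq (fun w => hkF φ s w ^ 2)
    simpa only [Equiv.trans_apply, Equiv.inv_apply, Equiv.coe_mulRight] using this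
  have hsq : Summable fun w : G => hkF φ s w ^ 2 := hk_sq_summable hpos h1 hs
  have hsq2 : Summable fun w : G => hkF φ s (w⁻¹ * z) ^ 2 := by
    have := (((Equiv.inv G).trans (Equiv.mulRight z)).summable_iff
      (f := fun w => hkF φ s w ^ 2)).mpr hsq
    simpa only [Function.comp_def, Equiv.trans_apply, Equiv.inv_apply, Equiv.coe_mulRight]
      using this
  calc hkF φ t z = ∑' w : G, hkF φ s w * hkF φ s (w⁻¹ * z) := key1.symm
    _ ≤ Real.sqrt (∑' w : G, hkF φ s w ^ 2) * Real.sqrt (∑' w : G, hkF φ s (w⁻¹ * z) ^ 2) :=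
        tsum_cs (fun w => hk_nonneg hpos hs w) (fun w => hk_nonneg hpos hs _) hsq hsq2
    _ = Real.sqrt (hkF φ t 1) * Real.sqrt (hkF φ t 1) := by rw [key3, key2]
    _ = hkF φ t 1 := Real.mul_self_sqrt (by
        rw [← key2]; exact tsum_nonneg fun w => sq_nonneg _)

end CS
section Main
variable {G : Type*} [Group G] [Countable G]

/-- The quadratic form `⟨f, P^k f⟩` as a finite double sum. -/
noncomputable def aSeq (φ f : G → ℝ) (T : Finset G) (k : ℕ) : ℝ :=
  ∑ u ∈ T, ∑ v ∈ T, f u * f v * convPow φ k (u⁻¹ * v)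

/-- The quadratic form `⟨f, H_s f⟩` as a finite double sum. -/
noncomputable def cQ (φ f : G → ℝ) (T : Finset G) (s : ℝ) : ℝ :=
  ∑ u ∈ T, ∑ v ∈ T, f u * f v * hkF φ s (u⁻¹ * v)

variable {φ f : G → ℝ} {T : Finset G}

lemma sumT_f_sq (hT : ∀ x ∉ T, f x = 0) (hnorm : (∑' x, f x ^ 2) = 1) :
    (∑ x ∈ T, f x ^ 2) = 1 := by
  calc (∑ x ∈ T, f x ^ 2) = ∑' x, f x ^ 2 :=
        (tsum_eq_sum (fun x hx => by rw [hT x hx]; ring)).symm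
    _ = 1 := hnorm

lemma f_sq_summable (hT : ∀ x ∉ T, f x = 0) : Summable fun x => f x ^ 2 :=
  summable_of_ne_finset_zero (s := T) fun x hx => by rw [hT x hx]; ring

lemma f_abs_le_one (hT : ∀ x ∉ T, f x = 0) (hnorm : (∑' x, f x ^ 2) = 1) (z : G) : |f z| ≤ 1 := by
  have h := Summable.le_tsum (f_sq_summable hT) z fun j _ => sq_nonneg (f j)
  rw [hnorm] at h
  nlinarith [abs_nonneg (f z), sq_abs (f z)]

/-- `cQ` as a series in the `aSeq`. -/
lemma cQ_eq_series (hpos : ∀ x, 0 ≤ φ x) (h1 : (∑' x, φ x) = 1) {s : ℝ} (hs : 0 ≤ s) :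
    cQ φ f T s = Real.exp (-s) * ∑' k : ℕ, s ^ k / (Nat.factorial k : ℝ) * aSeq φ f T k := by
  have hterm : ∀ u v : G, f u * f v * hkF φ s (u⁻¹ * v)
      = ∑' k : ℕ, Real.exp (-s) * (s ^ k / (Nat.factorial k : ℝ)
          * (f u * f v * convPow φ k (u⁻¹ * v))) := by
    intro u v
    calc f u * f v * hkF φ s (u⁻¹ * v)
        = (f u * f v * Real.exp (-s)) * ∑' k : ℕ, s ^ k / (Nat.factorial k : ℝ)
            * convPow φ k (u⁻¹ * v) := by simp only [hkF]; ring
      _ = ∑' k : ℕ, (f u * f v * Real.exp (-s)) * (s ^ k / (Nat.factorial k : ℝ)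
            * convPow φ k (u⁻¹ * v)) := (tsum_mul_left).symm
      _ = _ := tsum_congr fun k => by ring
  have hsuminner : ∀ (u v : G), Summable (fun k : ℕ => Real.exp (-s)
      * (s ^ k / (Nat.factorial k : ℝ) * (f u * f v * convPow φ k (u⁻¹ * v)))) := by
    intro u v
    apply Summable.mul_left
    apply Summable.congr ((inner_summable hpos h1 hs (u⁻¹ * v)).mul_left (f u * f v))
    intro k
    ring
  simp only [cQ]
  rw [Finset.sum_congr rfl (fun u _ => Finset.sum_congr rfl (fun v _ => hterm u v))]
  -- pull the finite sums inside the tsum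
  have step1 : ∀ u ∈ T, (∑ v ∈ T, ∑' k : ℕ, Real.exp (-s) * (s ^ k / (Nat.factorial k : ℝ)
      * (f u * f v * convPow φ k (u⁻¹ * v))))
      = ∑' k : ℕ, ∑ v ∈ T, Real.exp (-s) * (s ^ k / (Nat.factorial k : ℝ)
        * (f u * f v * convPow φ k (u⁻¹ * v))) := by
    intro u _
    exact (Summable.tsum_finsetSum fun v _ => hsuminner u v).symm
  rw [Finset.sum_congr rfl step1]
  have hsummid : ∀ u ∈ T, Summable fun k : ℕ => ∑ v ∈ T, Real.exp (-s)
      * (s ^ k / (Nat.factorial k : ℝ) * (f u * f v * convPow φ k (u⁻¹ * v))) :=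
    fun u _ => summable_sum fun v _ => hsuminner u v
  rw [(Summable.tsum_finsetSum hsummid).symm]
  rw [← tsum_mul_left (a := Real.exp (-s))]
  apply tsum_congr
  intro k
  simp only [aSeq, Finset.mul_sum]

lemma aSeq_zero (hT : ∀ x ∉ T, f x = 0) (hnorm : (∑' x, f x ^ 2) = 1) :
    aSeq φ f T 0 = 1 := by
  classical
  have hterm : ∀ u ∈ T, (∑ v ∈ T, f u * f v * convPow φ 0 (u⁻¹ * v)) = f u ^ 2 := by
    intro u hu
    have : ∀ v ∈ T, f u * f v * convPow φ 0 (u⁻¹ * v)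
        = if u = v then f u ^ 2 else 0 := by
      intro v _
      by_cases h : u = v
      · subst h; simp [convPow]; ring
      · have : ¬(u⁻¹ * v = 1) := fun hh => h (inv_mul_eq_one.mp hh)
        simp [convPow, this, h]
    rw [Finset.sum_congr rfl this, Finset.sum_ite_eq T u (fun _ => f u ^ 2), if_pos hu]
  rw [aSeq, Finset.sum_congr rfl hterm, sumT_f_sq hT hnorm]

lemma aSeq_abs_le_one (hpos : ∀ x, 0 ≤ φ x) (h1 : (∑' x, φ x) = 1)
    (hsym : ∀ x, φ x⁻¹ = φ x)
    (hT : ∀ x ∉ T, f x = 0) (hnorm : (∑' x, f x ^ 2) = 1) (k : ℕ) :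
    |aSeq φ f T k| ≤ 1 := by
  classical
  have hP := convPow_hasSum hpos h1 k
  have hP0 := convPow_nonneg hpos k
  have habs : |aSeq φ f T k| ≤ ∑ u ∈ T, ∑ v ∈ T, |f u| * |f v| * convPow φ k (u⁻¹ * v) := by
    refine (Finset.abs_sum_le_sum_abs _ _).trans ?_
    apply Finset.sum_le_sum
    intro u _
    refine (Finset.abs_sum_le_sum_abs _ _).trans ?_
    apply Finset.sum_le_sum
    intro v _
    rw [abs_mul, abs_mul, abs_of_nonneg (hP0 _)]
  have hinner : ∀ z : G, (∑ v ∈ T, convPow φ k (z⁻¹ * v)) ≤ 1 := by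
    intro z
    have himg : (∑ v ∈ T, convPow φ k (z⁻¹ * v))
        = ∑ w ∈ T.image (fun v => z⁻¹ * v), convPow φ k w := by
      rw [Finset.sum_image (fun a _ b _ h => mul_left_cancel h)]
    rw [himg]
    calc (∑ w ∈ T.image (fun v => z⁻¹ * v), convPow φ k w)
        ≤ ∑' w, convPow φ k w := Summable.sum_le_tsum _ (fun w _ => hP0 w) hP.summable
      _ = 1 := hP.tsum_eq
  have hinner' : ∀ z : G, (∑ u ∈ T, convPow φ k (u⁻¹ * z)) ≤ 1 := by
    intro z
    have himg : (∑ u ∈ T, convPow φ k (u⁻¹ * z))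
        = ∑ w ∈ T.image (fun u => u⁻¹ * z), convPow φ k w := by
      rw [Finset.sum_image]
      intro a _ b _ h
      have := mul_right_cancel h
      exact inv_injective this
    rw [himg]
    calc (∑ w ∈ T.image (fun u => u⁻¹ * z), convPow φ k w)
        ≤ ∑' w, convPow φ k w := Summable.sum_le_tsum _ (fun w _ => hP0 w) hP.summable
      _ = 1 := hP.tsum_eq
  have hbound : (∑ u ∈ T, ∑ v ∈ T, |f u| * |f v| * convPow φ k (u⁻¹ * v)) ≤ 1 := by
    have hsplit : ∀ u ∈ T, ∀ v ∈ T, |f u| * |f v| * convPow φ k (u⁻¹ * v)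
        ≤ (f u ^ 2 + f v ^ 2) / 2 * convPow φ k (u⁻¹ * v) := by
      intro u _ v _
      apply mul_le_mul_of_nonneg_right _ (hP0 _)
      nlinarith [sq_nonneg (|f u| - |f v|), sq_abs (f u), sq_abs (f v)]
    calc (∑ u ∈ T, ∑ v ∈ T, |f u| * |f v| * convPow φ k (u⁻¹ * v))
        ≤ ∑ u ∈ T, ∑ v ∈ T, (f u ^ 2 + f v ^ 2) / 2 * convPow φ k (u⁻¹ * v) := by
          apply Finset.sum_le_sum
          intro u hu
          exact Finset.sum_le_sum fun v hv => hsplit u hu v hv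
      _ = (∑ u ∈ T, ∑ v ∈ T, f u ^ 2 / 2 * convPow φ k (u⁻¹ * v))
            + ∑ u ∈ T, ∑ v ∈ T, f v ^ 2 / 2 * convPow φ k (u⁻¹ * v) := by
          rw [← Finset.sum_add_distrib]
          apply Finset.sum_congr rfl
          intro u _
          rw [← Finset.sum_add_distrib]
          exact Finset.sum_congr rfl fun v _ => by ring
      _ ≤ (∑ u ∈ T, f u ^ 2 / 2) + ∑ v ∈ T, f v ^ 2 / 2 := by
          apply add_le_add
          · apply Finset.sum_le_sum
            intro u _
            rw [← Finset.mul_sum]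
            calc f u ^ 2 / 2 * (∑ v ∈ T, convPow φ k (u⁻¹ * v))
                ≤ f u ^ 2 / 2 * 1 :=
                  mul_le_mul_of_nonneg_left (hinner u) (by positivity)
              _ = f u ^ 2 / 2 := mul_one _
          · rw [Finset.sum_comm]
            apply Finset.sum_le_sum
            intro v _
            rw [← Finset.mul_sum]
            calc f v ^ 2 / 2 * (∑ u ∈ T, convPow φ k (u⁻¹ * v))
                ≤ f v ^ 2 / 2 * 1 :=
                  mul_le_mul_of_nonneg_left (hinner' v) (by positivity)
              _ = f v ^ 2 / 2 := mul_one _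
      _ = ∑ x ∈ T, f x ^ 2 := by
          rw [← Finset.sum_add_distrib]
          exact Finset.sum_congr rfl fun x _ => by ring
      _ = 1 := sumT_f_sq hT hnorm
  exact habs.trans hbound

end Main
section A1
variable {G : Type*} [Group G] [Countable G]
variable {φ f : G → ℝ} {T : Finset G}

lemma aSeq_one (hpos : ∀ x, 0 ≤ φ x) (h1 : (∑' x, φ x) = 1)
    (hT : ∀ x ∉ T, f x = 0) (hnorm : (∑' x, f x ^ 2) = 1) :
    aSeq φ f T 1 = 1 - dirichletE φ f := by
  classical
  have hφs : Summable φ := summable_phi h1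
  have hf2 : Summable fun x => f x ^ 2 := f_sq_summable hT
  have habs : ∀ z, |f z| ≤ 1 := f_abs_le_one hT hnorm
  have hb2 : ∀ z, f z ^ 2 ≤ 1 := fun z => by nlinarith [habs z, abs_nonneg (f z), sq_abs (f z)]
  -- row summabilities
  have hArow : ∀ x : G, Summable fun y => f (x * y) ^ 2 * φ y := by
    intro x
    apply summable_of_abs_le (g := φ) _ hφs
    intro y
    rw [abs_of_nonneg (mul_nonneg (sq_nonneg _) (hpos y))]
    calc f (x * y) ^ 2 * φ y ≤ 1 * φ y := mul_le_mul_of_nonneg_right (hb2 _) (hpos y)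
      _ = φ y := one_mul _
  have hBrow : ∀ x : G, Summable fun y => f (x * y) * φ y := by
    intro x
    apply summable_of_abs_le (g := φ) _ hφs
    intro y
    rw [abs_mul, abs_of_nonneg (hpos y)]
    calc |f (x * y)| * φ y ≤ 1 * φ y := mul_le_mul_of_nonneg_right (habs _) (hpos y)
      _ = φ y := one_mul _
  set A : G → ℝ := fun x => ∑' y, f (x * y) ^ 2 * φ y with hA
  set B : G → ℝ := fun x => ∑' y, f (x * y) * φ y with hB
  -- pointwise expansion of the Dirichlet integrand
  have hD : ∀ x : G, (∑' y, (f (x * y) - f x) ^ 2 * φ y) = A x - 2 * f x * B x + f x ^ 2 := by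
    intro x
    have hexp : ∀ y : G, (f (x * y) - f x) ^ 2 * φ y
        = (f (x * y) ^ 2 * φ y - 2 * f x * (f (x * y) * φ y)) + f x ^ 2 * φ y := fun y => by ring
    rw [tsum_congr hexp]
    have hsub : Summable fun y => f (x * y) ^ 2 * φ y - 2 * f x * (f (x * y) * φ y) :=
      (hArow x).sub ((hBrow x).mul_left _)
    rw [Summable.tsum_add hsub (hφs.mul_left (f x ^ 2))]
    rw [Summable.tsum_sub (hArow x) ((hBrow x).mul_left _)]
    rw [tsum_mul_left, tsum_mul_left, h1, mul_one]
  -- Fubini package for A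
  have hA0 : ∀ (y x : G), 0 ≤ f (x * y) ^ 2 * φ y := fun y x => mul_nonneg (sq_nonneg _) (hpos y)
  have hArow' : ∀ y : G, Summable fun x => f (x * y) ^ 2 * φ y := by
    intro y
    exact (hf2.comp_injective (mul_left_injective y)).mul_right (φ y)
  have hArowsum : ∀ y : G, (∑' x, f (x * y) ^ 2 * φ y) = φ y := by
    intro y
    rw [tsum_mul_right]
    have : (∑' x, f (x * y) ^ 2) = ∑' x, f x ^ 2 := by
      have := (Equiv.mulRight y).tsum_eq (fun x => f x ^ 2)
      simpa only [Equiv.coe_mulRight] using this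
    rw [this, hnorm, one_mul]
  have hAs : Summable fun y : G => ∑' x, f (x * y) ^ 2 * φ y :=
    Summable.congr hφs fun y => (hArowsum y).symm
  obtain ⟨hAcol, hAcolsum, hAcomm⟩ := nn_fubini hA0 hArow' hAs
  have hAsummable : Summable A := by
    apply Summable.congr hAcolsum
    intro x
    rfl
  have hAtsum : (∑' x, A x) = 1 := by
    have : (∑' x : G, ∑' y : G, f (x * y) ^ 2 * φ y) = 1 := by
      rw [← hAcomm, tsum_congr hArowsum, h1]
    exact this
  -- the middle term
  have hfB_summable : Summable fun x => f x * B x :=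
    summable_of_ne_finset_zero (s := T) fun x hx => by rw [hT x hx]; ring
  have hBval : ∀ x : G, B x = ∑ v ∈ T, f v * φ (x⁻¹ * v) := by
    intro x
    have hre := (Equiv.mulLeft x⁻¹).tsum_eq (fun y => f (x * y) * φ y)
    simp only [Equiv.coe_mulLeft] at hre
    have hre2 : (∑' v, f (x * (x⁻¹ * v)) * φ (x⁻¹ * v)) = B x := hre
    have hsimp : ∀ v : G, f (x * (x⁻¹ * v)) * φ (x⁻¹ * v) = f v * φ (x⁻¹ * v) := by
      intro v
      rw [mul_inv_cancel_left]
    rw [← hre2, tsum_congr hsimp]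
    exact tsum_eq_sum fun v hv => by rw [hT v hv, zero_mul]
  have hfBtsum : (∑' x, f x * B x) = aSeq φ f T 1 := by
    rw [tsum_eq_sum (s := T) (fun x hx => by rw [hT x hx, zero_mul])]
    rw [aSeq, convPow_one_eq]
    apply Finset.sum_congr rfl
    intro u _
    rw [hBval u, Finset.mul_sum]
    exact Finset.sum_congr rfl fun v _ => by ring
  -- assemble
  have hEsplit : (∑' x, (A x - 2 * f x * B x + f x ^ 2))
      = (∑' x, A x) - 2 * (∑' x, f x * B x) + ∑' x, f x ^ 2 := by
    have h2fB : Summable fun x => 2 * (f x * B x) := hfB_summable.mul_left 2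
    have h2fB' : Summable fun x => 2 * f x * B x :=
      Summable.congr h2fB fun x => by ring
    rw [Summable.tsum_add (hAsummable.sub h2fB') hf2, Summable.tsum_sub hAsummable h2fB']
    congr 1
    congr 1
    have : (∑' x, 2 * f x * B x) = ∑' x, 2 * (f x * B x) := tsum_congr fun x => by ring
    rw [this, tsum_mul_left]
  have hEval : dirichletE φ f = 1 - aSeq φ f T 1 := by
    rw [dirichletE]
    rw [tsum_congr hD, hEsplit, hAtsum, hfBtsum, hnorm]
    ring
  rw [hEval]
  ring

end A1
section Ineq
variable {G : Type*} [Group G] [Countable G]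
variable {φ f : G → ℝ} {T : Finset G}

lemma dirichletE_nonneg (hpos : ∀ x, 0 ≤ φ x) : 0 ≤ dirichletE φ f :=
  mul_nonneg (by norm_num)
    (tsum_nonneg fun x => tsum_nonneg fun y => mul_nonneg (sq_nonneg _) (hpos y))

lemma cQ_sq_le (hpos : ∀ x, 0 ≤ φ x) (h1 : (∑' x, φ x) = 1) (hsym : ∀ x, φ x⁻¹ = φ x)
    (hT : ∀ x ∉ T, f x = 0) (hnorm : (∑' x, f x ^ 2) = 1) {s : ℝ} (hs : 0 ≤ s) :
    cQ φ f T s ^ 2 ≤ cQ φ f T (s + s) := by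
  classical
  set K : G → ℝ := fun z => hkF φ s z with hK
  have hKs : Summable K := (hk_mass hpos h1 hs).1
  have hK0 : ∀ z, 0 ≤ K z := fun z => hk_nonneg hpos hs z
  have hK1 : ∀ z, K z ≤ 1 := fun z => hk_le_one hpos h1 hs z
  set Ff : G → ℝ := fun x => ∑ y ∈ T, f y * K (x⁻¹ * y) with hFf
  have hshift : ∀ u : G, Summable fun x : G => K (x⁻¹ * u) := by
    intro u
    have := (((Equiv.inv G).trans (Equiv.mulRight u)).summable_iff (f := K)).mpr hKs
    simpa only [Function.comp_def, Equiv.trans_apply, Equiv.inv_apply, Equiv.coe_mulRight]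
      using this
  have hpair : ∀ u v : G, Summable fun x => (f u * K (x⁻¹ * u)) * (f v * K (x⁻¹ * v)) := by
    intro u v
    apply summable_of_abs_le (g := fun x => |f u * f v| * K (x⁻¹ * u)) _
      ((hshift u).mul_left _)
    intro x
    rw [abs_mul, abs_mul, abs_mul, abs_of_nonneg (hK0 _), abs_of_nonneg (hK0 _)]
    calc |f u| * K (x⁻¹ * u) * (|f v| * K (x⁻¹ * v))
        ≤ |f u| * K (x⁻¹ * u) * (|f v| * 1) := by
          apply mul_le_mul_of_nonneg_left _ (mul_nonneg (abs_nonneg _) (hK0 _))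
          exact mul_le_mul_of_nonneg_left (hK1 _) (abs_nonneg _)
      _ = |f u * f v| * K (x⁻¹ * u) := by rw [abs_mul]; ring
  have hFf_sq : ∀ x : G, Ff x ^ 2
      = ∑ u ∈ T, ∑ v ∈ T, (f u * K (x⁻¹ * u)) * (f v * K (x⁻¹ * v)) := by
    intro x
    rw [sq, hFf]
    exact Finset.sum_mul_sum T T _ _
  have hsumFf2 : Summable fun x => Ff x ^ 2 := by
    apply Summable.congr (f := fun x => ∑ u ∈ T, ∑ v ∈ T,
      (f u * K (x⁻¹ * u)) * (f v * K (x⁻¹ * v)))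
    · exact summable_sum fun u _ => summable_sum fun v _ => hpair u v
    · exact fun x => (hFf_sq x).symm
  have hinner_conv : ∀ u v : G, (∑' x : G, K (x⁻¹ * u) * K (x⁻¹ * v))
      = hkF φ (s + s) (u⁻¹ * v) := by
    intro u v
    have e1 := ((Equiv.inv G).trans (Equiv.mulRight u)).tsum_eq
      (fun w => K w * K (w * (u⁻¹ * v)))
    simp only [Equiv.trans_apply, Equiv.inv_apply, Equiv.coe_mulRight] at e1
    have e1' : (∑' x : G, K (x⁻¹ * u) * K (x⁻¹ * u * (u⁻¹ * v)))
        = ∑' w : G, K w * K (w * (u⁻¹ * v)) := e1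
    have hc1 : ∀ x : G, K (x⁻¹ * u) * K (x⁻¹ * v)
        = K (x⁻¹ * u) * K (x⁻¹ * u * (u⁻¹ * v)) := by
      intro x
      congr 2
      group
    rw [tsum_congr hc1, e1']
    have e2 := (Equiv.inv G).tsum_eq (fun w => K w * K (w * (u⁻¹ * v)))
    simp only [Equiv.inv_apply] at e2
    rw [← e2]
    have hc2 : ∀ w : G, K w⁻¹ * K (w⁻¹ * (u⁻¹ * v)) = K w * K (w⁻¹ * (u⁻¹ * v)) := by
      intro w
      simp only [hK]
      rw [hk_symm hpos h1 hsym s w]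
    rw [tsum_congr hc2]
    exact hk_conv hpos h1 hs hs (u⁻¹ * v)
  have htsumFf2 : (∑' x, Ff x ^ 2) = cQ φ f T (s + s) := by
    rw [tsum_congr hFf_sq]
    rw [Summable.tsum_finsetSum fun u _ => summable_sum fun v _ => hpair u v]
    rw [cQ]
    apply Finset.sum_congr rfl
    intro u _
    rw [Summable.tsum_finsetSum fun v _ => hpair u v]
    apply Finset.sum_congr rfl
    intro v _
    have hpull : ∀ x : G, (f u * K (x⁻¹ * u)) * (f v * K (x⁻¹ * v))
        = (f u * f v) * (K (x⁻¹ * u) * K (x⁻¹ * v)) := fun x => by ring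
    rw [tsum_congr hpull, tsum_mul_left, hinner_conv u v]
  have hcQ_inner : cQ φ f T s = ∑ x ∈ T, f x * Ff x := by
    rw [cQ]
    apply Finset.sum_congr rfl
    intro u _
    rw [hFf, Finset.mul_sum]
    exact Finset.sum_congr rfl fun v _ => by ring
  have hCS := Finset.sum_mul_sq_le_sq_mul_sq T f Ff
  have hFfsq_le : (∑ x ∈ T, Ff x ^ 2) ≤ ∑' x, Ff x ^ 2 :=
    Summable.sum_le_tsum T (fun x _ => sq_nonneg _) hsumFf2
  calc cQ φ f T s ^ 2 = (∑ x ∈ T, f x * Ff x) ^ 2 := by rw [hcQ_inner]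
    _ ≤ (∑ x ∈ T, f x ^ 2) * ∑ x ∈ T, Ff x ^ 2 := hCS
    _ = ∑ x ∈ T, Ff x ^ 2 := by rw [sumT_f_sq hT hnorm, one_mul]
    _ ≤ ∑' x, Ff x ^ 2 := hFfsq_le
    _ = cQ φ f T (s + s) := htsumFf2

lemma cQ_upper (hpos : ∀ x, 0 ≤ φ x) (h1 : (∑' x, φ x) = 1) (hsym : ∀ x, φ x⁻¹ = φ x)
    (hT : ∀ x ∉ T, f x = 0) (hnorm : (∑' x, f x ^ 2) = 1) {t : ℝ} (ht : 0 ≤ t)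
    {v : ℝ} (hcard : (T.card : ℝ) ≤ v) :
    cQ φ f T t ≤ v * hkF φ t 1 := by
  have hcen : ∀ z : G, hkF φ t z ≤ hkF φ t 1 := hk_center hpos h1 hsym ht
  have hk0 : ∀ z : G, 0 ≤ hkF φ t z := fun z => hk_nonneg hpos ht z
  have step1 : cQ φ f T t ≤ (∑ x ∈ T, |f x|) ^ 2 * hkF φ t 1 := by
    rw [sq, Finset.sum_mul_sum, Finset.sum_mul]
    rw [cQ]
    apply Finset.sum_le_sum
    intro u _
    rw [Finset.sum_mul]
    apply Finset.sum_le_sum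
    intro w _
    calc f u * f w * hkF φ t (u⁻¹ * w) ≤ |f u * f w * hkF φ t (u⁻¹ * w)| := le_abs_self _
      _ = |f u| * |f w| * hkF φ t (u⁻¹ * w) := by
          rw [abs_mul, abs_mul, abs_of_nonneg (hk0 _)]
      _ ≤ |f u| * |f w| * hkF φ t 1 :=
          mul_le_mul_of_nonneg_left (hcen _) (mul_nonneg (abs_nonneg _) (abs_nonneg _))
  have step2 : (∑ x ∈ T, |f x|) ^ 2 ≤ (T.card : ℝ) := by
    have hCS := Finset.sum_mul_sq_le_sq_mul_sq T (fun _ => (1 : ℝ)) (fun x => |f x|)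
    simp only [one_pow, one_mul, Finset.sum_const, nsmul_eq_mul, mul_one] at hCS
    have habs2 : (∑ x ∈ T, |f x| ^ 2) = 1 := by
      rw [Finset.sum_congr rfl fun x _ => sq_abs (f x)]
      exact sumT_f_sq hT hnorm
    rw [habs2, mul_one] at hCS
    exact hCS
  calc cQ φ f T t ≤ (∑ x ∈ T, |f x|) ^ 2 * hkF φ t 1 := step1
    _ ≤ (T.card : ℝ) * hkF φ t 1 := mul_le_mul_of_nonneg_right step2 (hk0 1)
    _ ≤ v * hkF φ t 1 := mul_le_mul_of_nonneg_right hcard (hk0 1)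

lemma cQ_chain (hpos : ∀ x, 0 ≤ φ x) (h1 : (∑' x, φ x) = 1) (hsym : ∀ x, φ x⁻¹ = φ x)
    (hT : ∀ x ∉ T, f x = 0) (hnorm : (∑' x, f x ^ 2) = 1) {t : ℝ} (ht : 0 < t) :
    ∀ n : ℕ, cQ φ f T (t / 2 ^ n) ^ (2 ^ n : ℕ) ≤ cQ φ f T t := by
  intro n
  induction n with
  | zero => simp
  | succ n ih =>
      have hsn : (0 : ℝ) ≤ t / 2 ^ (n + 1) := by positivity
      have h6 := cQ_sq_le hpos h1 hsym hT hnorm hsn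
      have heq : t / 2 ^ (n + 1) + t / 2 ^ (n + 1) = t / 2 ^ n := by
        field_simp
        ring
      rw [heq] at h6
      calc cQ φ f T (t / 2 ^ (n + 1)) ^ (2 ^ (n + 1) : ℕ)
          = (cQ φ f T (t / 2 ^ (n + 1)) ^ 2) ^ (2 ^ n : ℕ) := by
            rw [← pow_mul]
            congr 1
            rw [pow_succ]
            ring
        _ ≤ cQ φ f T (t / 2 ^ n) ^ (2 ^ n : ℕ) := pow_le_pow_left₀ (sq_nonneg _) h6 _
        _ ≤ cQ φ f T t := ih

lemma exp_neg_le (x : ℝ) (hx : 0 ≤ x) : Real.exp (-x) ≤ 1 - x + x ^ 2 := by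
  have h1 := Real.add_one_le_exp x
  have h2 : Real.exp (-x) * Real.exp x = 1 := by rw [← Real.exp_add]; simp
  have h3 : Real.exp (-x) * (x + 1) ≤ 1 := by
    calc Real.exp (-x) * (x + 1) ≤ Real.exp (-x) * Real.exp x :=
          mul_le_mul_of_nonneg_left h1 (Real.exp_nonneg _)
      _ = 1 := h2
  nlinarith [Real.exp_pos (-x), mul_nonneg (mul_nonneg hx hx) hx]

set_option maxHeartbeats 1000000 in
lemma cQ_lower_series (hpos : ∀ x, 0 ≤ φ x) (h1 : (∑' x, φ x) = 1) (hsym : ∀ x, φ x⁻¹ = φ x)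
    (hT : ∀ x ∉ T, f x = 0) (hnorm : (∑' x, f x ^ 2) = 1) {s : ℝ} (hs0 : 0 < s) (hs1 : s ≤ 1) :
    1 - s * dirichletE φ f - 2 * s ^ 2 ≤ cQ φ f T s := by
  set E := dirichletE φ f with hEdef
  have hE0 : 0 ≤ E := dirichletE_nonneg hpos
  have ha0 : aSeq φ f T 0 = 1 := aSeq_zero hT hnorm
  have ha1 : aSeq φ f T 1 = 1 - E := aSeq_one hpos h1 hT hnorm
  have habs : ∀ k, |aSeq φ f T k| ≤ 1 := aSeq_abs_le_one hpos h1 hsym hT hnorm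
  have hs : (0:ℝ) ≤ s := le_of_lt hs0
  set c : ℕ → ℝ := fun k => s ^ k / (Nat.factorial k : ℝ) with hc
  have hc0 : ∀ k, 0 ≤ c k := coef_nonneg hs
  have hcsum : Summable c := coef_summable s
  have hsummable : Summable fun k => c k * aSeq φ f T k := by
    apply summable_of_abs_le (g := c) _ hcsum
    intro k
    rw [abs_mul, abs_of_nonneg (hc0 k)]
    calc c k * |aSeq φ f T k| ≤ c k * 1 := mul_le_mul_of_nonneg_left (habs k) (hc0 k)
      _ = c k := mul_one _
  -- peel off two terms of the series
  have hsummable1 : Summable fun k => c (k + 1) * aSeq φ f T (k + 1) :=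
    (summable_nat_add_iff 1).mpr hsummable
  have hsummable2 : Summable fun k => c (k + 2) * aSeq φ f T (k + 2) :=
    (summable_nat_add_iff 2).mpr hsummable
  have hcsum1 : Summable fun k => c (k + 1) := (summable_nat_add_iff 1).mpr hcsum
  have hcsum2 : Summable fun k => c (k + 2) := (summable_nat_add_iff 2).mpr hcsum
  have hpeel : (∑' k, c k * aSeq φ f T k)
      = c 0 * aSeq φ f T 0 + (c 1 * aSeq φ f T 1
        + ∑' k, c (k + 2) * aSeq φ f T (k + 2)) := by
    rw [Summable.tsum_eq_zero_add hsummable]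
    congr 1
    rw [Summable.tsum_eq_zero_add hsummable1]
  have hpeelc : (∑' k, c (k + 2)) = Real.exp s - 1 - s := by
    have e1 : (∑' k, c k) = Real.exp s := coef_tsum s
    have e2 : (∑' k, c k) = c 0 + (c 1 + ∑' k, c (k + 2)) := by
      rw [Summable.tsum_eq_zero_add hcsum]
      congr 1
      rw [Summable.tsum_eq_zero_add hcsum1]
    have hc0v : c 0 = 1 := by simp [hc]
    have hc1v : c 1 = s := by simp [hc]
    rw [hc0v, hc1v, e1] at e2
    linarith
  have htail : -(Real.exp s - 1 - s) ≤ ∑' k, c (k + 2) * aSeq φ f T (k + 2) := by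
    rw [← hpeelc, ← tsum_neg]
    apply Summable.tsum_le_tsum _ hcsum2.neg hsummable2
    intro k
    have := habs (k + 2)
    have h' : -1 ≤ aSeq φ f T (k + 2) := neg_le_of_abs_le this
    nlinarith [hc0 (k + 2)]
  have hseries : 2 + 2 * s - s * E - Real.exp s ≤ ∑' k, c k * aSeq φ f T k := by
    rw [hpeel, ha0, ha1]
    have hc0v : c 0 = 1 := by simp [hc]
    have hc1v : c 1 = s := by simp [hc]
    rw [hc0v, hc1v]
    nlinarith [htail]
  have hcq : cQ φ f T s = Real.exp (-s) * ∑' k, c k * aSeq φ f T k :=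
    cQ_eq_series hpos h1 hs
  have hexp1 : 1 - s ≤ Real.exp (-s) := by
    have := Real.add_one_le_exp (-s)
    linarith
  have hins : 0 ≤ 2 + 2 * s - s * E := by
    have : E ≤ 2 := by
      have := habs 1
      rw [ha1] at this
      have h' := abs_le.mp this
      linarith [h'.1]
    nlinarith
  have hee : Real.exp (-s) * Real.exp s = 1 := by rw [← Real.exp_add]; simp
  calc 1 - s * E - 2 * s ^ 2
      ≤ (1 - s) * (2 + 2 * s - s * E) - 1 := by nlinarith
    _ ≤ Real.exp (-s) * (2 + 2 * s - s * E) - 1 :=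
        sub_le_sub_right (mul_le_mul_of_nonneg_right hexp1 hins) 1
    _ = Real.exp (-s) * (2 + 2 * s - s * E - Real.exp s) := by
        linear_combination hee
    _ ≤ Real.exp (-s) * ∑' k, c k * aSeq φ f T k :=
        mul_le_mul_of_nonneg_left hseries (Real.exp_nonneg _)
    _ = cQ φ f T s := hcq.symm

end Ineq
section Core
variable {G : Type*} [Group G] [Countable G]
variable {φ f : G → ℝ} {T : Finset G}

lemma two_pow_cast (n : ℕ) : ((2 ^ n : ℕ) : ℝ) = 2 ^ n := by push_cast; ring

lemma exists_pow_ge (r : ℝ) : ∃ n : ℕ, r ≤ 2 ^ n := by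
  obtain ⟨N, hN⟩ := exists_nat_gt r
  refine ⟨N, hN.le.trans ?_⟩
  have := Nat.lt_two_pow_self (n := N)
  calc (N : ℝ) ≤ ((2 ^ N : ℕ) : ℝ) := by exact_mod_cast this.le
    _ = 2 ^ N := two_pow_cast N

/-- Core estimate: `exp(-2tE) ≤ cQ t`. -/
lemma core_bound (hpos : ∀ x, 0 ≤ φ x) (h1 : (∑' x, φ x) = 1) (hsym : ∀ x, φ x⁻¹ = φ x)
    (hT : ∀ x ∉ T, f x = 0) (hnorm : (∑' x, f x ^ 2) = 1) {t : ℝ} (ht : 0 < t) :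
    Real.exp (-(2 * t * dirichletE φ f)) ≤ cQ φ f T t := by
  have hE0 : 0 ≤ dirichletE φ f := dirichletE_nonneg hpos
  set E := dirichletE φ f with hEdef
  rcases eq_or_lt_of_le hE0 with hE | hE
  · -- E = 0 : show 1 ≤ cQ t
    rw [← hE]
    simp only [mul_zero, neg_zero, Real.exp_zero]
    have key : ∀ ε : ℝ, 0 < ε → 1 ≤ cQ φ f T t + ε := by
      intro ε hε
      obtain ⟨n, hn⟩ := exists_pow_ge (max (2 * t) (2 * t ^ 2 / ε))
      have h2n : (0:ℝ) < 2 ^ n := by positivity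
      set s := t / 2 ^ n with hsdef
      have hs0 : 0 < s := by positivity
      have hs12 : s ≤ 1 / 2 := by
        rw [hsdef, div_le_div_iff₀ h2n (by norm_num)]
        have : 2 * t ≤ 2 ^ n := le_trans (le_max_left _ _) hn
        linarith
      have hs1 : s ≤ 1 := hs12.trans (by norm_num)
      have hlow := cQ_lower_series hpos h1 hsym hT hnorm hs0 hs1
      rw [← hEdef, ← hE] at hlow
      have hlow' : 1 - 2 * s ^ 2 ≤ cQ φ f T s := by
        calc 1 - 2 * s ^ 2 = 1 - s * 0 - 2 * s ^ 2 := by ring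
          _ ≤ cQ φ f T s := hlow
      have hbase0 : (0:ℝ) ≤ 1 - 2 * s ^ 2 := by nlinarith
      have hchain := cQ_chain hpos h1 hsym hT hnorm ht n
      have hpow : (1 - 2 * s ^ 2) ^ (2 ^ n : ℕ) ≤ cQ φ f T s ^ (2 ^ n : ℕ) :=
        pow_le_pow_left₀ hbase0 hlow' _
      have hbern : 1 - ((2 ^ n : ℕ) : ℝ) * (2 * s ^ 2) ≤ (1 - 2 * s ^ 2) ^ (2 ^ n : ℕ) := by
        have := one_add_mul_le_pow (a := -(2 * s ^ 2)) (by nlinarith) (2 ^ n)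
        calc 1 - ((2 ^ n : ℕ) : ℝ) * (2 * s ^ 2)
            = 1 + ((2 ^ n : ℕ) : ℝ) * (-(2 * s ^ 2)) := by ring
          _ ≤ (1 + -(2 * s ^ 2)) ^ (2 ^ n : ℕ) := this
          _ = (1 - 2 * s ^ 2) ^ (2 ^ n : ℕ) := by ring_nf
      have herr : ((2 ^ n : ℕ) : ℝ) * (2 * s ^ 2) ≤ ε := by
        rw [two_pow_cast n, hsdef]
        have hexp : (2:ℝ) ^ n * (2 * (t / 2 ^ n) ^ 2) = 2 * t ^ 2 / 2 ^ n := by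
          field_simp
        rw [hexp]
        rw [div_le_iff₀ h2n]
        have h2 : 2 * t ^ 2 / ε ≤ 2 ^ n := le_trans (le_max_right _ _) hn
        calc 2 * t ^ 2 = (2 * t ^ 2 / ε) * ε := by field_simp
          _ ≤ 2 ^ n * ε := mul_le_mul_of_nonneg_right h2 hε.le
          _ = ε * 2 ^ n := by ring
      calc (1:ℝ) = (1 - ((2 ^ n : ℕ) : ℝ) * (2 * s ^ 2)) + ((2 ^ n : ℕ) : ℝ) * (2 * s ^ 2) := by
            ring
        _ ≤ cQ φ f T t + ε := by
            apply add_le_add _ herr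
            exact le_trans (le_trans hbern hpow) hchain
    exact le_of_forall_pos_le_add key
  · -- E > 0
    set s0 : ℝ := min 1 (E / (2 * (1 + 2 * E ^ 2))) with hs0def
    have hs0pos : 0 < s0 := by
      apply lt_min one_pos
      positivity
    obtain ⟨n, hn⟩ := exists_pow_ge (t / s0)
    have h2n : (0:ℝ) < 2 ^ n := by positivity
    set s := t / 2 ^ n with hsdef
    have hs0' : 0 < s := by positivity
    have hss0 : s ≤ s0 := by
      rw [hsdef, div_le_iff₀ h2n]
      calc t = (t / s0) * s0 := by field_simp
        _ ≤ 2 ^ n * s0 := mul_le_mul_of_nonneg_right hn hs0pos.le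
        _ = s0 * 2 ^ n := by ring
    have hs1 : s ≤ 1 := hss0.trans (min_le_left _ _)
    have hsE : s ≤ E / (2 * (1 + 2 * E ^ 2)) := hss0.trans (min_le_right _ _)
    have hsE' : 2 * s * (1 + 2 * E ^ 2) ≤ E := by
      rw [le_div_iff₀ (by positivity)] at hsE
      linarith [hsE]
    have hlow := cQ_lower_series hpos h1 hsym hT hnorm hs0' hs1
    rw [← hEdef] at hlow
    have hexp := exp_neg_le (2 * s * E) (by positivity)
    have hcmp : 1 - 2 * s * E + (2 * s * E) ^ 2 ≤ 1 - s * E - 2 * s ^ 2 := by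
      nlinarith [mul_le_mul_of_nonneg_right hsE' (le_of_lt hs0'), sq_nonneg (s * E)]
    have hkey : Real.exp (-(2 * s * E)) ≤ cQ φ f T s :=
      le_trans hexp (le_trans (by nlinarith [hcmp]) hlow)
    have hchain := cQ_chain hpos h1 hsym hT hnorm ht n
    have hpow : Real.exp (-(2 * s * E)) ^ (2 ^ n : ℕ) ≤ cQ φ f T s ^ (2 ^ n : ℕ) :=
      pow_le_pow_left₀ (Real.exp_nonneg _) hkey _
    have hexppow : Real.exp (-(2 * s * E)) ^ (2 ^ n : ℕ) = Real.exp (-(2 * t * E)) := by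
      rw [← Real.exp_nat_mul]
      congr 1
      rw [two_pow_cast n, hsdef]
      field_simp
    calc Real.exp (-(2 * t * E)) = Real.exp (-(2 * s * E)) ^ (2 ^ n : ℕ) := hexppow.symm
      _ ≤ cQ φ f T s ^ (2 ^ n : ℕ) := hpow
      _ ≤ cQ φ f T t := hchain

lemma hk_pos (hpos : ∀ x, 0 ≤ φ x) (h1 : (∑' x, φ x) = 1) {t : ℝ} (ht : 0 ≤ t) :
    Real.exp (-t) ≤ hkF φ t 1 := by
  classical
  have h0term : t ^ 0 / (Nat.factorial 0 : ℝ) * convPow φ 0 (1 : G) = 1 := by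
    simp [convPow]
  have hge : (1:ℝ) ≤ ∑' k : ℕ, t ^ k / (Nat.factorial k : ℝ) * convPow φ k (1 : G) := by
    rw [← h0term]
    apply Summable.le_tsum (inner_summable hpos h1 ht 1) 0
    intro j _
    exact mul_nonneg (coef_nonneg ht j) (convPow_nonneg hpos j 1)
  calc Real.exp (-t) = Real.exp (-t) * 1 := (mul_one _).symm
    _ ≤ hkF φ t 1 := mul_le_mul_of_nonneg_left hge (Real.exp_nonneg _)

end Core
end Coulhon


/-- Continuous-time return probability. -/
noncomputable def contHeat {G : Type*} [Group G] (φ : G → ℝ) (t : ℝ) : ℝ :=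
  Real.exp (-t) * ∑' k : ℕ, t ^ k / (Nat.factorial k : ℝ) * convPow φ k 1

/-- The L² spectral profile. -/
noncomputable def specProfile {G : Type*} [Group G] (φ : G → ℝ) (v : ℝ) : ℝ :=
  sInf {E : ℝ | ∃ f : G → ℝ, (Function.support f).Finite ∧
    ((Function.support f).ncard : ℝ) ≤ v ∧ (∑' x, (f x) ^ 2) = 1 ∧ E = dirichletE φ f}

/-- Spectral profile lower bound from the heat kernel (Coulhon): for any `v ≥ 1`,
`Λ_φ(v) ≥ sup_{t>0} (1/(2t))·log(1/(v·h_t^φ(e)))`. -/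
theorem specProfile_lower_from_heat {G : Type*} [Group G] [Countable G]
    (φ : G → ℝ) (hφ : IsSymProb φ) (v : ℝ) (hv : 1 ≤ v) :
    ∀ t > (0:ℝ), (1 / (2 * t)) * Real.log (1 / (v * contHeat φ t)) ≤ specProfile φ v := by
  classical
  obtain ⟨hpos, h1, hsym⟩ := hφ
  intro t ht
  have hcont : contHeat φ t = Coulhon.hkF φ t 1 := rfl
  apply le_csInf
  · -- nonemptiness via the indicator of the identity
    refine ⟨dirichletE φ (fun x => if x = 1 then (1:ℝ) else 0),
      (fun x => if x = 1 then (1:ℝ) else 0), ?_, ?_, ?_, rfl⟩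
    · have hsupp : Function.support (fun x : G => if x = 1 then (1:ℝ) else 0) = {1} := by
        ext x
        by_cases h : x = 1 <;> simp [Function.support, h]
      rw [hsupp]
      exact Set.finite_singleton 1
    · have hsupp : Function.support (fun x : G => if x = 1 then (1:ℝ) else 0) = {1} := by
        ext x
        by_cases h : x = 1 <;> simp [Function.support, h]
      rw [hsupp, Set.ncard_singleton]
      exact_mod_cast hv
    · have hsq : ∀ x : G, (if x = 1 then (1:ℝ) else 0) ^ 2 = if x = 1 then (1:ℝ) else 0 := by
        intro x
        by_cases h : x = 1 <;> simp [h]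
      rw [tsum_congr hsq]
      exact tsum_ite_eq 1 1
  · rintro E ⟨f, hfin, hcard, hnorm, rfl⟩
    set T := hfin.toFinset with hTdef
    have hT : ∀ x ∉ T, f x = 0 := by
      intro x hx
      by_contra hfx
      exact hx (hfin.mem_toFinset.mpr (Function.mem_support.mpr hfx))
    have hcardT : (T.card : ℝ) ≤ v := by
      rw [Set.ncard_eq_toFinset_card _ hfin] at hcard
      exact hcard
    have hcore := Coulhon.core_bound hpos h1 hsym hT hnorm ht
    have hupper := Coulhon.cQ_upper hpos h1 hsym hT hnorm ht.le hcardT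
    have hkey : Real.exp (-(2 * t * dirichletE φ f)) ≤ v * contHeat φ t := by
      rw [hcont]
      exact hcore.trans hupper
    have hhkpos : 0 < v * contHeat φ t := by
      rw [hcont]
      exact mul_pos (lt_of_lt_of_le one_pos hv)
        (lt_of_lt_of_le (Real.exp_pos (-t)) (Coulhon.hk_pos hpos h1 ht.le))
    have hlog : -(2 * t * dirichletE φ f) ≤ Real.log (v * contHeat φ t) := by
      have := Real.log_le_log (Real.exp_pos _) hkey
      rwa [Real.log_exp] at this
    have hloginv : Real.log (1 / (v * contHeat φ t)) = -Real.log (v * contHeat φ t) := by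
      rw [one_div, Real.log_inv]
    rw [hloginv]
    have h2t : (0:ℝ) < 2 * t := by linarith
    calc (1 / (2 * t)) * (-Real.log (v * contHeat φ t))
        ≤ (1 / (2 * t)) * (2 * t * dirichletE φ f) := by
          apply mul_le_mul_of_nonneg_left _ (by positivity)
          linarith
      _ = dirichletE φ f := by field_simp
end

section
/- If φ is a symmetric probability measure on a finitely generated group G with φ^{(n)}(e) ≥ exp(−n/π(n)) for an increasing function π: (0,∞) → (0,∞) with π(t) ≤ c·t, then there exists A > 0 such that for all n, Λ_φ(exp(A·n/π(n))) ≤ A/(2π(n)). -/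
open scoped BigOperators

section Tools
variable {G : Type*} {H : Type*}

lemma my_summable_mul_of_sq (f g : G → ℝ) (hf : Summable (fun x => f x ^ 2))
    (hg : Summable (fun x => g x ^ 2)) : Summable (fun x => f x * g x) := by
  have h : ∀ x, |f x * g x| ≤ (f x ^ 2 + g x ^ 2) / 2 := by
    intro x
    rw [abs_mul]
    nlinarith [sq_nonneg (|f x| - |g x|), sq_abs (f x), sq_abs (g x),
      abs_nonneg (f x), abs_nonneg (g x)]
  exact Summable.of_abs (Summable.of_nonneg_of_le (fun x => abs_nonneg _) h
    ((hf.add hg).div_const 2))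

lemma my_tsum_cs (f g : G → ℝ) (hf : Summable (fun x => f x ^ 2))
    (hg : Summable (fun x => g x ^ 2)) :
    (∑' x, f x * g x) ^ 2 ≤ (∑' x, f x ^ 2) * (∑' x, g x ^ 2) := by
  have hfg := my_summable_mul_of_sq f g hf hg
  have key : ∀ s : Finset G, (∑ x ∈ s, f x * g x) ^ 2 ≤ (∑' x, f x ^ 2) * (∑' x, g x ^ 2) := by
    intro s
    calc (∑ x ∈ s, f x * g x) ^ 2 ≤ (∑ x ∈ s, f x ^ 2) * (∑ x ∈ s, g x ^ 2) :=
          Finset.sum_mul_sq_le_sq_mul_sq s f g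
      _ ≤ (∑' x, f x ^ 2) * (∑' x, g x ^ 2) :=
          mul_le_mul (Summable.sum_le_tsum s (fun i _ => sq_nonneg _) hf)
            (Summable.sum_le_tsum s (fun i _ => sq_nonneg _) hg)
            (Finset.sum_nonneg fun i _ => sq_nonneg _)
            (tsum_nonneg fun i => sq_nonneg _)
  have h1 : Filter.Tendsto (fun s : Finset G => (∑ x ∈ s, f x * g x) ^ 2)
      Filter.atTop (nhds ((∑' x, f x * g x) ^ 2)) :=
    Filter.Tendsto.pow hfg.hasSum 2
  exact le_of_tendsto' h1 key

/-- Fubini for nonneg real double sums, from one good orientation. -/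
lemma my_tsum_swap (F : G → H → ℝ) (h0 : ∀ x y, 0 ≤ F x y)
    (h1 : ∀ x, Summable (F x)) (h2 : Summable fun x => ∑' y, F x y) :
    Summable (fun y => ∑' x, F x y) ∧ (∀ y, Summable fun x => F x y) ∧
      ∑' x, ∑' y, F x y = ∑' y, ∑' x, F x y := by
  have hp : Summable (Function.uncurry F) := by
    exact (summable_prod_of_nonneg (f := Function.uncurry F)
      (fun p => h0 p.1 p.2)).mpr ⟨h1, h2⟩
  have hp' : Summable (fun q : H × G => F q.2 q.1) := by
    have := hp.prod_symm
    simpa [Function.uncurry] using this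
  have h3 := (summable_prod_of_nonneg (f := fun q : H × G => F q.2 q.1)
    (fun q => h0 q.2 q.1)).mp hp'
  refine ⟨h3.2, fun y => h3.1 y, ?_⟩
  have e1 : ∑' p : G × H, Function.uncurry F p = ∑' x, ∑' y, F x y :=
    Summable.tsum_prod' hp h1
  have e2 : ∑' q : H × G, F q.2 q.1 = ∑' y, ∑' x, F x y :=
    Summable.tsum_prod' hp' h3.1
  rw [← e1, ← e2]
  exact ((Equiv.prodComm H G).tsum_eq (Function.uncurry F)).symm

end Tools
section Conv
variable {G : Type*} [Group G] [Countable G]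
set_option linter.unusedSectionVars false

lemma my_summable_translate (ν : G → ℝ) (hν : Summable ν) (g : G) :
    Summable (fun x => ν (g * x)) := by
  have := (Equiv.mulLeft g).summable_iff (f := ν)
  rw [← this] at hν
  exact hν

lemma my_tsum_translate (ν : G → ℝ) (g : G) : ∑' x, ν (g * x) = ∑' x, ν x :=
  (Equiv.mulLeft g).tsum_eq ν

lemma my_conv_nonneg (μ ν : G → ℝ) (hμ : ∀ x, 0 ≤ μ x) (hν : ∀ x, 0 ≤ ν x) (x : G) :
    0 ≤ convolve μ ν x :=
  tsum_nonneg fun y => mul_nonneg (hμ y) (hν _)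

lemma my_le_tsum (μ : G → ℝ) (hμ0 : ∀ x, 0 ≤ μ x) (hμs : Summable μ) (x : G) :
    μ x ≤ ∑' z, μ z :=
  Summable.le_tsum hμs x (fun j _ => hμ0 j)

lemma my_conv_slice_summable (μ ν : G → ℝ) (hμs : Summable μ) (hν0 : ∀ x, 0 ≤ ν x)
    (B : ℝ) (hνB : ∀ x, ν x ≤ B) (x : G) :
    Summable (fun y => μ y * ν (y⁻¹ * x)) := by
  refine Summable.of_abs (Summable.of_nonneg_of_le (fun y => abs_nonneg _)
    (fun y => ?_) (hμs.abs.mul_right B))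
  rw [abs_mul]
  exact mul_le_mul_of_nonneg_left (by rw [abs_of_nonneg (hν0 _)]; exact hνB _) (abs_nonneg _)

lemma my_conv_le (μ ν : G → ℝ) (hμ0 : ∀ x, 0 ≤ μ x) (hμs : Summable μ)
    (hν0 : ∀ x, 0 ≤ ν x) (B : ℝ) (hνB : ∀ x, ν x ≤ B) (x : G) :
    convolve μ ν x ≤ (∑' z, μ z) * B := by
  have hB : 0 ≤ B := le_trans (hν0 1) (hνB 1)
  calc convolve μ ν x ≤ ∑' y, μ y * B := by
        apply Summable.tsum_le_tsum _ (my_conv_slice_summable μ ν hμs hν0 B hνB x) (hμs.mul_right B)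
        intro y
        exact mul_le_mul_of_nonneg_left (hνB _) (hμ0 y)
    _ = (∑' z, μ z) * B := tsum_mul_right

lemma my_conv_mass (μ ν : G → ℝ) (hμ0 : ∀ x, 0 ≤ μ x) (hμs : Summable μ)
    (hν0 : ∀ x, 0 ≤ ν x) (hνs : Summable ν) :
    Summable (convolve μ ν) ∧ ∑' x, convolve μ ν x = (∑' x, μ x) * (∑' x, ν x) := by
  have key := my_tsum_swap (fun y x => μ y * ν (y⁻¹ * x))
    (fun y x => mul_nonneg (hμ0 y) (hν0 _))
    (fun y => (my_summable_translate ν hνs y⁻¹).mul_left (μ y))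
    (by
      apply Summable.congr (hμs.mul_right (∑' z, ν z))
      intro y
      rw [tsum_mul_left, my_tsum_translate])
  obtain ⟨hsum, _, heq⟩ := key
  constructor
  · exact hsum
  · rw [show convolve μ ν = fun x => ∑' y, μ y * ν (y⁻¹ * x) from rfl, ← heq]
    calc ∑' (y : G), ∑' (x : G), μ y * ν (y⁻¹ * x)
        = ∑' (y : G), μ y * (∑' z, ν z) := by
          apply tsum_congr; intro y; rw [tsum_mul_left, my_tsum_translate]
      _ = (∑' x, μ x) * (∑' x, ν x) := tsum_mul_right

end Conv
section Pow
variable {G : Type*} [Group G] [Countable G]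
set_option linter.unusedSectionVars false

lemma my_summable_inv_translate (ρ : G → ℝ) (hρs : Summable ρ) (x : G) :
    Summable (fun z => ρ (z⁻¹ * x)) := by
  have h1 : Summable (fun w => ρ (w * x)) := by
    simpa [Function.comp_def] using ((Equiv.mulRight x).summable_iff (f := ρ)).mpr hρs
  simpa [Function.comp_def] using ((Equiv.inv G).summable_iff (f := fun w => ρ (w * x))).mpr h1

lemma my_conv_assoc (μ ν ρ : G → ℝ) (hμ0 : ∀ x, 0 ≤ μ x) (hμs : Summable μ)
    (hν0 : ∀ x, 0 ≤ ν x) (hνs : Summable ν) (Bν : ℝ) (hνB : ∀ x, ν x ≤ Bν)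
    (hρ0 : ∀ x, 0 ≤ ρ x) (hρs : Summable ρ) (Bρ : ℝ) (hρB : ∀ x, ρ x ≤ Bρ) :
    convolve (convolve μ ν) ρ = convolve μ (convolve ν ρ) := by
  funext x
  have hBν : 0 ≤ Bν := le_trans (hν0 1) (hνB 1)
  have hrow : Summable fun z => (∑' y, μ y * ν (y⁻¹ * z)) * ρ (z⁻¹ * x) := by
    apply Summable.of_nonneg_of_le
      (fun z => mul_nonneg (my_conv_nonneg μ ν hμ0 hν0 z) (hρ0 _))
      (fun z => mul_le_mul_of_nonneg_right (my_conv_le μ ν hμ0 hμs hν0 Bν hνB z) (hρ0 _))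
      (((my_summable_inv_translate ρ hρs x)).mul_left _)
  have key := my_tsum_swap (fun z y => μ y * ν (y⁻¹ * z) * ρ (z⁻¹ * x))
    (fun z y => mul_nonneg (mul_nonneg (hμ0 y) (hν0 _)) (hρ0 _))
    (fun z => (my_conv_slice_summable μ ν hμs hν0 Bν hνB z).mul_right (ρ (z⁻¹ * x)))
    (by
      apply Summable.congr hrow
      intro z
      exact tsum_mul_right.symm)
  obtain ⟨_, _, heq⟩ := key
  calc convolve (convolve μ ν) ρ x
      = ∑' z, ∑' y, μ y * ν (y⁻¹ * z) * ρ (z⁻¹ * x) := by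
        apply tsum_congr; intro z
        exact tsum_mul_right.symm
    _ = ∑' y, ∑' z, μ y * ν (y⁻¹ * z) * ρ (z⁻¹ * x) := heq
    _ = ∑' y, μ y * ∑' z, ν (y⁻¹ * z) * ρ (z⁻¹ * x) := by
        apply tsum_congr; intro y
        rw [← tsum_mul_left]
        apply tsum_congr; intro z
        ring
    _ = convolve μ (convolve ν ρ) x := by
        apply tsum_congr; intro y
        congr 1
        have := (Equiv.mulLeft y).tsum_eq (fun z => ν (y⁻¹ * z) * ρ (z⁻¹ * x))
        rw [← this]
        apply tsum_congr; intro w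
        simp [mul_assoc, mul_inv_rev]

lemma my_convPow_zero (μ : G → ℝ) (x : G) [Decidable (x = 1)] :
    convPow μ 0 x = if x = 1 then 1 else 0 := by
  rcases eq_or_ne x 1 with h | h <;> simp [convPow, h]

lemma my_dirac_summable (μ : G → ℝ) : Summable (convPow μ 0) := by
  classical
  apply summable_of_ne_finset_zero (s := {(1:G)})
  intro x hx
  rw [my_convPow_zero]
  simp only [Finset.mem_singleton] at hx
  simp [hx]

lemma my_dirac_mass (μ : G → ℝ) : ∑' x, convPow μ 0 x = 1 := by
  classical
  have : ∀ x : G, convPow μ 0 x = if x = (1:G) then (1:ℝ) else 0 :=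
    fun x => my_convPow_zero μ x
  rw [tsum_congr this]
  exact tsum_ite_eq (1:G) (fun _ => (1:ℝ))

lemma my_conv_dirac_left (μ ν : G → ℝ) : convolve (convPow μ 0) ν = ν := by
  classical
  funext x
  have : ∀ y : G, convPow μ 0 y * ν (y⁻¹ * x) =
      if y = (1:G) then ν (y⁻¹ * x) else 0 := by
    intro y
    rw [my_convPow_zero]
    split_ifs <;> simp
  rw [show convolve (convPow μ 0) ν x = ∑' y, convPow μ 0 y * ν (y⁻¹ * x) from rfl,
    tsum_congr this, tsum_eq_single (1:G) (by intro y hy; simp [hy])]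
  simp

lemma my_conv_dirac_right (μ ν : G → ℝ) : convolve ν (convPow μ 0) = ν := by
  classical
  funext x
  rw [show convolve ν (convPow μ 0) x = ∑' y, ν y * convPow μ 0 (y⁻¹ * x) from rfl,
    tsum_eq_single x (by
      intro y hy
      rw [my_convPow_zero]
      have : ¬ (y⁻¹ * x = 1) := fun h => hy (inv_mul_eq_one.mp h)
      simp [this])]
  rw [my_convPow_zero]
  simp

end Pow
section Pow2
variable {G : Type*} [Group G] [Countable G]
set_option linter.unusedSectionVars false
set_option linter.unusedVariables false

def GoodProb {G : Type*} [Group G] (μ : G → ℝ) : Prop :=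
  (∀ x, 0 ≤ μ x) ∧ Summable μ ∧ (∑' x, μ x) = 1 ∧ ∀ x, μ x⁻¹ = μ x

lemma my_pow_basic (μ : G → ℝ) (hμ : GoodProb μ) (m : ℕ) :
    (∀ x, 0 ≤ convPow μ m x) ∧ Summable (convPow μ m) ∧ (∑' x, convPow μ m x) = 1 := by
  obtain ⟨h0, hs, h1, hsym⟩ := hμ
  induction m with
  | zero =>
    refine ⟨fun x => ?_, my_dirac_summable μ, my_dirac_mass μ⟩
    classical
    rw [my_convPow_zero]
    split_ifs <;> norm_num
  | succ n ih =>
    obtain ⟨ih0, ihs, ih1⟩ := ih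
    have hm := my_conv_mass μ (convPow μ n) h0 hs ih0 ihs
    refine ⟨my_conv_nonneg μ _ h0 ih0, hm.1, ?_⟩
    rw [show convPow μ (n+1) = convolve μ (convPow μ n) from rfl, hm.2, h1, ih1, one_mul]

lemma my_pow_le_one (μ : G → ℝ) (hμ : GoodProb μ) (m : ℕ) (x : G) :
    convPow μ m x ≤ 1 := by
  obtain ⟨h0, hs, h1⟩ := my_pow_basic μ hμ m
  calc convPow μ m x ≤ ∑' z, convPow μ m z := my_le_tsum _ h0 hs x
    _ = 1 := h1

lemma my_pow_comm (μ : G → ℝ) (hμ : GoodProb μ) (m : ℕ) :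
    convolve μ (convPow μ m) = convolve (convPow μ m) μ := by
  induction m with
  | zero => rw [my_conv_dirac_left μ μ, my_conv_dirac_right μ μ]
  | succ n ih =>
    have h0 := hμ.1
    have hs := hμ.2.1
    have h1 := hμ.2.2.1
    obtain ⟨p0, ps, p1⟩ := my_pow_basic μ hμ n
    have hb := my_pow_le_one μ hμ n
    have h1' : ∀ x, μ x ≤ 1 := fun x => by
      calc μ x ≤ ∑' z, μ z := my_le_tsum _ h0 hs x
        _ = 1 := h1
    calc convolve μ (convPow μ (n+1)) = convolve μ (convolve μ (convPow μ n)) := rfl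
      _ = convolve μ (convolve (convPow μ n) μ) := by rw [ih]
      _ = convolve (convolve μ (convPow μ n)) μ :=
          (my_conv_assoc μ (convPow μ n) μ h0 hs p0 ps 1 hb h0 hs 1 h1').symm
      _ = convolve (convPow μ (n+1)) μ := rfl

lemma my_pow_add (μ : G → ℝ) (hμ : GoodProb μ) (m k : ℕ) :
    convPow μ (m + k) = convolve (convPow μ m) (convPow μ k) := by
  induction m with
  | zero => rw [my_conv_dirac_left μ (convPow μ k)]; norm_num
  | succ n ih =>
    have h0 := hμ.1
    have hs := hμ.2.1
    obtain ⟨p0, ps, p1⟩ := my_pow_basic μ hμ n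
    obtain ⟨q0, qs, q1⟩ := my_pow_basic μ hμ k
    have pb := my_pow_le_one μ hμ n
    have qb := my_pow_le_one μ hμ k
    have : n + 1 + k = (n + k) + 1 := by omega
    rw [this]
    calc convPow μ ((n + k) + 1) = convolve μ (convPow μ (n + k)) := rfl
      _ = convolve μ (convolve (convPow μ n) (convPow μ k)) := by rw [ih]
      _ = convolve (convolve μ (convPow μ n)) (convPow μ k) :=
          (my_conv_assoc μ (convPow μ n) (convPow μ k) h0 hs p0 ps 1 pb q0 qs 1 qb).symm
      _ = convolve (convPow μ (n+1)) (convPow μ k) := rfl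

lemma my_pow_symm (μ : G → ℝ) (hμ : GoodProb μ) (m : ℕ) (x : G) :
    convPow μ m x⁻¹ = convPow μ m x := by
  have hsym := hμ.2.2.2
  induction m generalizing x with
  | zero =>
    classical
    rw [my_convPow_zero, my_convPow_zero]
    simp [inv_eq_one]
  | succ n ih =>
    have hcomm := my_pow_comm μ hμ n
    calc convPow μ (n+1) x⁻¹ = ∑' y, μ y * convPow μ n (y⁻¹ * x⁻¹) := rfl
      _ = ∑' y, convPow μ n (x * y) * μ y := by
          apply tsum_congr; intro y
          rw [show y⁻¹ * x⁻¹ = (x * y)⁻¹ by rw [mul_inv_rev], ih]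
          ring
      _ = ∑' z, convPow μ n z * μ (x⁻¹ * z) := by
          have := (Equiv.mulLeft x).tsum_eq (fun z => convPow μ n z * μ (x⁻¹ * z))
          rw [← this]
          apply tsum_congr; intro y
          simp
      _ = ∑' z, convPow μ n z * μ (z⁻¹ * x) := by
          apply tsum_congr; intro z
          rw [show μ (x⁻¹ * z) = μ (z⁻¹ * x) by rw [← hsym (x⁻¹ * z)]; simp [mul_inv_rev]]
      _ = convolve (convPow μ n) μ x := rfl
      _ = convPow μ (n+1) x := by rw [← hcomm]; rfl

lemma my_pow_ip (μ : G → ℝ) (hμ : GoodProb μ) (m k : ℕ) :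
    convPow μ (m + k) 1 = ∑' y, convPow μ m y * convPow μ k y := by
  rw [my_pow_add μ hμ m k]
  show ∑' y, convPow μ m y * convPow μ k (y⁻¹ * 1) = _
  apply tsum_congr; intro y
  rw [mul_one, my_pow_symm μ hμ k]

lemma my_pow_sq_summable (μ : G → ℝ) (hμ : GoodProb μ) (m : ℕ) :
    Summable (fun x => convPow μ m x ^ 2) := by
  obtain ⟨p0, ps, p1⟩ := my_pow_basic μ hμ m
  apply Summable.of_nonneg_of_le (fun x => sq_nonneg _) _ ps
  intro x
  calc convPow μ m x ^ 2 = convPow μ m x * convPow μ m x := sq (convPow μ m x) ▸ rfl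
    _ ≤ 1 * convPow μ m x := mul_le_mul_of_nonneg_right (my_pow_le_one μ hμ m x) (p0 x)
    _ = convPow μ m x := one_mul _

end Pow2
section Contr
variable {G : Type*} [Group G] [Countable G]
set_option linter.unusedSectionVars false
set_option linter.unusedVariables false

lemma my_contraction (μ f : G → ℝ) (hμ : GoodProb μ) (hf0 : ∀ x, 0 ≤ f x)
    (hfs : Summable f) (hf2 : Summable (fun x => f x ^ 2)) (B : ℝ) (hfB : ∀ x, f x ≤ B) :
    Summable (fun x => convolve μ f x ^ 2) ∧
      ∑' x, convolve μ f x ^ 2 ≤ ∑' x, f x ^ 2 := by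
  obtain ⟨h0, hs, h1, hsym⟩ := hμ
  have hB : 0 ≤ B := le_trans (hf0 1) (hfB 1)
  have hf20 : ∀ x, 0 ≤ f x ^ 2 := fun x => sq_nonneg _
  have hf2B : ∀ x, f x ^ 2 ≤ B ^ 2 := fun x => by nlinarith [hf0 x, hfB x]
  have hf2s : Summable (fun x => f x ^ 2) := hf2
  -- pointwise bound
  have hpt : ∀ x, convolve μ f x ^ 2 ≤ convolve μ (fun z => f z ^ 2) x := by
    intro x
    have hFs : Summable (fun y => Real.sqrt (μ y) ^ 2) := by
      apply Summable.congr hs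
      intro y
      rw [Real.sq_sqrt (h0 y)]
    have hGs : Summable (fun y => (Real.sqrt (μ y) * f (y⁻¹ * x)) ^ 2) := by
      apply Summable.congr (my_conv_slice_summable μ (fun z => f z ^ 2) hs hf20 (B^2) hf2B x)
      intro y
      rw [mul_pow, Real.sq_sqrt (h0 y)]
    have hcs := my_tsum_cs (fun y => Real.sqrt (μ y)) (fun y => Real.sqrt (μ y) * f (y⁻¹ * x))
      hFs hGs
    have e1 : ∑' y, Real.sqrt (μ y) * (Real.sqrt (μ y) * f (y⁻¹ * x)) = convolve μ f x := by
      apply tsum_congr; intro y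
      rw [← mul_assoc, Real.mul_self_sqrt (h0 y)]
    have e2 : ∑' y, Real.sqrt (μ y) ^ 2 = 1 := by
      rw [tsum_congr (fun y => Real.sq_sqrt (h0 y)), h1]
    have e3 : ∑' y, (Real.sqrt (μ y) * f (y⁻¹ * x)) ^ 2 = convolve μ (fun z => f z ^ 2) x := by
      apply tsum_congr; intro y
      rw [mul_pow, Real.sq_sqrt (h0 y)]
    rw [e1, e2, e3, one_mul] at hcs
    exact hcs
  have hmass := my_conv_mass μ (fun z => f z ^ 2) h0 hs hf20 hf2s
  have hsum2 : Summable (fun x => convolve μ f x ^ 2) :=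
    Summable.of_nonneg_of_le (fun x => sq_nonneg _) hpt hmass.1
  refine ⟨hsum2, ?_⟩
  calc ∑' x, convolve μ f x ^ 2 ≤ ∑' x, convolve μ (fun z => f z ^ 2) x :=
        Summable.tsum_le_tsum hpt hsum2 hmass.1
    _ = (∑' x, μ x) * (∑' x, f x ^ 2) := hmass.2
    _ = ∑' x, f x ^ 2 := by rw [h1, one_mul]

lemma my_b_even_succ (μ : G → ℝ) (hμ : GoodProb μ) (m : ℕ) :
    convPow μ (2*(m+1)) 1 ≤ convPow μ (2*m) 1 := by
  obtain ⟨p0, ps, p1⟩ := my_pow_basic μ hμ m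
  have hb := my_pow_le_one μ hμ m
  have h2m : convPow μ (2*m) 1 = ∑' y, convPow μ m y ^ 2 := by
    rw [show 2*m = m + m by ring, my_pow_ip μ hμ m m]
    exact tsum_congr fun y => (sq (convPow μ m y)).symm
  have h2m2 : convPow μ (2*(m+1)) 1 = ∑' y, convPow μ (m+1) y ^ 2 := by
    rw [show 2*(m+1) = (m+1) + (m+1) by ring, my_pow_ip μ hμ (m+1) (m+1)]
    exact tsum_congr fun y => (sq (convPow μ (m+1) y)).symm
  rw [h2m, h2m2]
  exact (my_contraction μ (convPow μ m) hμ p0 ps (my_pow_sq_summable μ hμ m) 1 hb).2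

lemma my_b_even_mono (μ : G → ℝ) (hμ : GoodProb μ) {j k : ℕ} (h : j ≤ k) :
    convPow μ (2*k) 1 ≤ convPow μ (2*j) 1 := by
  induction k with
  | zero => rw [Nat.le_zero.mp h]
  | succ n ih =>
    rcases Nat.lt_or_ge j (n+1) with hlt | hge
    · exact le_trans (my_b_even_succ μ hμ n) (ih (by omega))
    · rw [show j = n+1 by omega]

lemma my_b_odd_le_even (μ : G → ℝ) (hμ : GoodProb μ) (m : ℕ) :
    convPow μ (2*m+1) 1 ≤ convPow μ (2*m) 1 := by
  obtain ⟨p0, ps, p1⟩ := my_pow_basic μ hμ m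
  have hsq := my_pow_sq_summable μ hμ m
  have hsq1 := my_pow_sq_summable μ hμ (m+1)
  have hip : convPow μ (2*m+1) 1 = ∑' y, convPow μ m y * convPow μ (m+1) y := by
    rw [show 2*m+1 = m + (m+1) by ring, my_pow_ip μ hμ m (m+1)]
  have h2m : convPow μ (2*m) 1 = ∑' y, convPow μ m y ^ 2 := by
    rw [show 2*m = m + m by ring, my_pow_ip μ hμ m m]
    exact tsum_congr fun y => (sq (convPow μ m y)).symm
  have h2m2 : convPow μ (2*(m+1)) 1 = ∑' y, convPow μ (m+1) y ^ 2 := by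
    rw [show 2*(m+1) = (m+1) + (m+1) by ring, my_pow_ip μ hμ (m+1) (m+1)]
    exact tsum_congr fun y => (sq (convPow μ (m+1) y)).symm
  have hcs := my_tsum_cs (convPow μ m) (convPow μ (m+1)) hsq hsq1
  rw [← hip, ← h2m, ← h2m2] at hcs
  have h1 : convPow μ (2*(m+1)) 1 ≤ convPow μ (2*m) 1 := my_b_even_succ μ hμ m
  have h2 : 0 ≤ convPow μ (2*m+1) 1 := (my_pow_basic μ hμ (2*m+1)).1 1
  have h3 : 0 ≤ convPow μ (2*m) 1 := (my_pow_basic μ hμ (2*m)).1 1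
  nlinarith [hcs, h1, h2, h3]

end Contr
section Lazy
variable {G : Type*} [Group G] [Countable G]
set_option linter.unusedSectionVars false
set_option linter.unusedVariables false

noncomputable def myLazy {G : Type*} [Group G] (φ : G → ℝ) : G → ℝ :=
  fun x => (convPow φ 0 x + φ x) / 2

lemma my_symProb_good (φ : G → ℝ) (hφ : IsSymProb φ) : GoodProb φ := by
  obtain ⟨h0, h1, hsym⟩ := hφ
  have hs : Summable φ := by
    by_contra h
    rw [tsum_eq_zero_of_not_summable h] at h1
    norm_num at h1
  exact ⟨h0, hs, h1, hsym⟩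

lemma my_lazy_good (φ : G → ℝ) (hφ : GoodProb φ) : GoodProb (myLazy φ) := by
  obtain ⟨h0, hs, h1, hsym⟩ := hφ
  classical
  refine ⟨fun x => ?_, ?_, ?_, fun x => ?_⟩
  · have hd : (0:ℝ) ≤ convPow φ 0 x := by rw [my_convPow_zero]; split_ifs <;> norm_num
    have hx := h0 x
    unfold myLazy
    positivity
  · exact ((my_dirac_summable φ).add hs).div_const 2
  · unfold myLazy
    rw [tsum_div_const, Summable.tsum_add (my_dirac_summable φ) hs, my_dirac_mass, h1]
    norm_num
  · unfold myLazy
    rw [hsym]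
    congr 2
    rw [my_convPow_zero, my_convPow_zero]
    simp [inv_eq_one]

lemma my_lazy_conv (φ f : G → ℝ) (hφ : GoodProb φ) (hf0 : ∀ x, 0 ≤ f x)
    (B : ℝ) (hfB : ∀ x, f x ≤ B) (x : G) :
    convolve (myLazy φ) f x = (f x + convolve φ f x) / 2 := by
  classical
  obtain ⟨h0, hs, h1, hsym⟩ := hφ
  have hterm : ∀ y : G, myLazy φ y * f (y⁻¹ * x) =
      (if y = (1:G) then f (y⁻¹ * x) else 0) / 2 + (φ y * f (y⁻¹ * x)) / 2 := by
    intro y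
    unfold myLazy
    rw [my_convPow_zero]
    split_ifs <;> ring
  have hsum1 : Summable (fun y : G => (if y = (1:G) then f (y⁻¹ * x) else 0) / 2) := by
    apply summable_of_ne_finset_zero (s := {(1:G)})
    intro y hy
    simp only [Finset.mem_singleton] at hy
    simp [hy]
  have hsum2 : Summable (fun y : G => (φ y * f (y⁻¹ * x)) / 2) :=
    (my_conv_slice_summable φ f hs hf0 B hfB x).div_const 2
  calc convolve (myLazy φ) f x
      = ∑' y, ((if y = (1:G) then f (y⁻¹ * x) else 0) / 2 + (φ y * f (y⁻¹ * x)) / 2) :=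
        tsum_congr hterm
    _ = (∑' y, (if y = (1:G) then f (y⁻¹ * x) else 0) / 2) + (∑' y, (φ y * f (y⁻¹ * x)) / 2) :=
        Summable.tsum_add hsum1 hsum2
    _ = (f x + convolve φ f x) / 2 := by
        rw [tsum_eq_single (1:G) (by intro y hy; simp [hy]), tsum_div_const]
        rw [show convolve φ f x = ∑' y, φ y * f (y⁻¹ * x) from rfl]
        simp only [inv_one, one_mul, if_true, if_pos]
        ring

/-- `b_{2m+2} ≤ b_{2m+1}` for the lazy walk. -/
lemma my_lazy_even_le_odd (φ : G → ℝ) (hφ : GoodProb φ) (m : ℕ) :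
    convPow (myLazy φ) (2*m+2) 1 ≤ convPow (myLazy φ) (2*m+1) 1 := by
  set L := myLazy φ with hL
  have hLg : GoodProb L := my_lazy_good φ hφ
  set g := convPow L m with hg
  obtain ⟨g0, gs, g1⟩ := my_pow_basic L hLg m
  have gb := my_pow_le_one L hLg m
  have g2 := my_pow_sq_summable L hLg m
  set Pg := convolve φ g with hPg
  have Pg0 : ∀ x, 0 ≤ Pg x := my_conv_nonneg φ g hφ.1 g0
  have hcontr := my_contraction φ g hφ g0 gs g2 1 gb
  have Pg2 : Summable (fun x => Pg x ^ 2) := hcontr.1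
  have hPgle : ∑' x, Pg x ^ 2 ≤ ∑' x, g x ^ 2 := hcontr.2
  have hgPg : Summable (fun x => g x * Pg x) := my_summable_mul_of_sq g Pg g2 Pg2
  have hLgexp : ∀ x, convPow L (m+1) x = (g x + Pg x) / 2 := by
    intro x
    rw [show convPow L (m+1) = convolve L g from rfl]
    exact my_lazy_conv φ g hφ g0 1 gb x
  have hip1 : convPow L (2*m+1) 1 = ∑' y, g y * convPow L (m+1) y := by
    rw [show 2*m+1 = m + (m+1) by ring, my_pow_ip L hLg m (m+1)]
  have hip2 : convPow L (2*m+2) 1 = ∑' y, convPow L (m+1) y ^ 2 := by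
    rw [show 2*m+2 = (m+1) + (m+1) by ring, my_pow_ip L hLg (m+1) (m+1)]
    exact tsum_congr fun y => (sq _).symm
  have e1 : ∑' y, g y * convPow L (m+1) y
      = (∑' y, g y ^ 2) / 2 + (∑' y, g y * Pg y) / 2 := by
    calc ∑' y, g y * convPow L (m+1) y = ∑' y, (g y ^ 2 / 2 + (g y * Pg y) / 2) := by
          apply tsum_congr; intro y; rw [hLgexp y]; ring
      _ = _ := by rw [Summable.tsum_add (g2.div_const 2) (hgPg.div_const 2), tsum_div_const, tsum_div_const]
  have e2 : ∑' y, convPow L (m+1) y ^ 2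
      = (∑' y, g y ^ 2) / 4 + (∑' y, g y * Pg y) / 2 + (∑' y, Pg y ^ 2) / 4 := by
    calc ∑' y, convPow L (m+1) y ^ 2
        = ∑' y, (g y ^ 2 / 4 + (g y * Pg y) / 2 + Pg y ^ 2 / 4) := by
          apply tsum_congr; intro y; rw [hLgexp y]; ring
      _ = _ := by
          rw [Summable.tsum_add ((g2.div_const 4).add (hgPg.div_const 2)) (Pg2.div_const 4),
            Summable.tsum_add (g2.div_const 4) (hgPg.div_const 2),
            tsum_div_const, tsum_div_const, tsum_div_const]
  rw [hip1, hip2, e1, e2]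
  linarith [hPgle]

end Lazy
section Energy
variable {G : Type*} [Group G] [Countable G]
set_option linter.unusedSectionVars false
set_option linter.unusedVariables false

lemma my_energy (μ g : G → ℝ) (hμ : GoodProb μ) (hg0 : ∀ x, 0 ≤ g x)
    (hgs : Summable g) (hg2 : Summable (fun x => g x ^ 2)) (hgb : ∀ x, g x ≤ 1)
    (hgsym : ∀ x, g x⁻¹ = g x) :
    (Summable fun x => ∑' y, (g (x*y) - g x) ^ 2 * μ y) ∧
      dirichletE μ g = (∑' x, g x ^ 2) - ∑' x, g x * convolve μ g x := by
  obtain ⟨h0, hs, h1, hsym⟩ := hμ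
  have hg20 : ∀ x, 0 ≤ g x ^ 2 := fun x => sq_nonneg _
  have hg2b : ∀ x, g x ^ 2 ≤ 1 := fun x => by nlinarith [hg0 x, hgb x]
  have s1 : ∀ x, Summable (fun y => g (x*y) ^ 2 * μ y) := by
    intro x
    refine Summable.of_nonneg_of_le (fun y => mul_nonneg (hg20 _) (h0 y)) (fun y => ?_) hs
    calc g (x*y) ^ 2 * μ y ≤ 1 * μ y := mul_le_mul_of_nonneg_right (hg2b _) (h0 y)
      _ = μ y := one_mul _
  have s2 : ∀ x, Summable (fun y => g (x*y) * μ y) := by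
    intro x
    refine Summable.of_nonneg_of_le (fun y => mul_nonneg (hg0 _) (h0 y)) (fun y => ?_) hs
    calc g (x*y) * μ y ≤ 1 * μ y := mul_le_mul_of_nonneg_right (hgb _) (h0 y)
      _ = μ y := one_mul _
  have s3 : ∀ x : G, Summable (fun y => g x ^ 2 * μ y) := fun x => hs.mul_left _
  have htr2 : ∀ y : G, (∑' x : G, g (x*y) ^ 2) = ∑' z, g z ^ 2 :=
    fun y => (Equiv.mulRight y).tsum_eq (fun z => g z ^ 2)
  have hsl2 : ∀ y : G, Summable (fun x => g (x*y) ^ 2) := fun y => by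
    simpa [Function.comp_def] using ((Equiv.mulRight y).summable_iff (f := fun z => g z ^ 2)).mpr hg2
  have hexp : ∀ x, (∑' y, (g (x*y) - g x) ^ 2 * μ y)
      = (∑' y, g (x*y) ^ 2 * μ y) + g x ^ 2 - 2 * g x * (∑' y, g (x*y) * μ y) := by
    intro x
    have hptw : ∀ y, (g (x*y) - g x) ^ 2 * μ y
        = (g (x*y) ^ 2 * μ y + g x ^ 2 * μ y) - (2 * g x) * (g (x*y) * μ y) := by
      intro y; ring
    rw [tsum_congr hptw, Summable.tsum_sub ((s1 x).add (s3 x)) ((s2 x).mul_left (2 * g x)),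
      Summable.tsum_add (s1 x) (s3 x)]
    rw [tsum_mul_left (a := g x ^ 2), tsum_mul_left (a := 2 * g x), h1, mul_one]
  -- Fubini for Q
  have hQfub := my_tsum_swap (fun y x => g (x*y) ^ 2 * μ y)
    (fun y x => mul_nonneg (hg20 _) (h0 y))
    (fun y => (hsl2 y).mul_right (μ y))
    (by
      apply Summable.congr (hs.mul_left (∑' z, g z ^ 2))
      intro y
      rw [show (∑' x, g (x*y) ^ 2 * μ y) = (∑' x : G, g (x*y) ^ 2) * μ y from tsum_mul_right,
        htr2 y])
  have hQsum : Summable (fun x : G => ∑' y, g (x*y) ^ 2 * μ y) := hQfub.1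
  have hQval : (∑' x : G, ∑' y, g (x*y) ^ 2 * μ y) = ∑' z, g z ^ 2 := by
    rw [← hQfub.2.2]
    calc ∑' (y : G), ∑' x, g (x*y) ^ 2 * μ y = ∑' y, (∑' z, g z ^ 2) * μ y := by
          apply tsum_congr; intro y
          rw [show (∑' x, g (x*y) ^ 2 * μ y) = (∑' x : G, g (x*y) ^ 2) * μ y from tsum_mul_right,
            htr2 y]
      _ = (∑' z, g z ^ 2) * ∑' y, μ y := tsum_mul_left
      _ = ∑' z, g z ^ 2 := by rw [h1, mul_one]
  -- R facts
  have hR0 : ∀ x : G, 0 ≤ ∑' y, g (x*y) * μ y :=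
    fun x => tsum_nonneg fun y => mul_nonneg (hg0 _) (h0 y)
  have hRb : ∀ x : G, (∑' y, g (x*y) * μ y) ≤ 1 := by
    intro x
    calc (∑' y, g (x*y) * μ y) ≤ ∑' y, μ y := Summable.tsum_le_tsum (fun y => by
          calc g (x*y) * μ y ≤ 1 * μ y := mul_le_mul_of_nonneg_right (hgb _) (h0 y)
            _ = μ y := one_mul _) (s2 x) hs
      _ = 1 := h1
  have hTsum : Summable (fun x => g x * ∑' y, g (x*y) * μ y) := by
    refine Summable.of_nonneg_of_le (fun x => mul_nonneg (hg0 x) (hR0 x)) (fun x => ?_) hgs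
    calc g x * (∑' y, g (x*y) * μ y) ≤ g x * 1 := mul_le_mul_of_nonneg_left (hRb x) (hg0 x)
      _ = g x := mul_one _
  have hTval : (∑' x, g x * ∑' y, g (x*y) * μ y) = ∑' x, g x * convolve μ g x := by
    rw [← (Equiv.inv G).tsum_eq (fun x => g x * ∑' y, g (x*y) * μ y)]
    apply tsum_congr
    intro x
    show g (x⁻¹) * (∑' y, g (x⁻¹*y) * μ y) = g x * convolve μ g x
    have hRx : (∑' y, g (x⁻¹*y) * μ y) = convolve μ g x := by
      rw [show convolve μ g x = ∑' y, μ y * g (y⁻¹ * x) from rfl]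
      apply tsum_congr; intro y
      rw [show g (x⁻¹ * y) = g (y⁻¹ * x) by rw [← hgsym (x⁻¹ * y)]; congr 1; simp [mul_inv_rev]]
      ring
    rw [hRx, hgsym]
  -- assemble
  have hI : Summable (fun x => ∑' y, (g (x*y) - g x) ^ 2 * μ y) := by
    apply Summable.congr (f := fun x =>
      ((∑' y, g (x*y) ^ 2 * μ y) + g x ^ 2) - 2 * (g x * ∑' y, g (x*y) * μ y))
    · exact ((hQsum.add hg2).sub (hTsum.mul_left 2))
    · intro x
      rw [hexp x]; ring
  refine ⟨hI, ?_⟩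
  have hsplit : ∑' x, ∑' y, (g (x*y) - g x) ^ 2 * μ y
      = (∑' x, ((∑' y, g (x*y) ^ 2 * μ y) + g x ^ 2)) - ∑' x, 2 * (g x * ∑' y, g (x*y) * μ y) := by
    rw [← Summable.tsum_sub (hQsum.add hg2) (hTsum.mul_left 2)]
    apply tsum_congr; intro x
    rw [hexp x]; ring
  rw [show dirichletE μ g = (1/2) * ∑' x, ∑' y, (g (x*y) - g x) ^ 2 * μ y from rfl, hsplit,
    Summable.tsum_add hQsum hg2, tsum_mul_left (a := (2:ℝ)), hQval, hTval]
  ring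

end Energy
section Nash
variable {G : Type*} [Group G] [Countable G]
set_option linter.unusedSectionVars false
set_option linter.unusedVariables false

lemma my_dirichlet_halve (φ f : G → ℝ) :
    dirichletE (myLazy φ) f = (1/2) * dirichletE φ f := by
  classical
  have hpt : ∀ x y : G, (f (x*y) - f x) ^ 2 * myLazy φ y = ((f (x*y) - f x) ^ 2 * φ y)/2 := by
    intro x y
    rcases eq_or_ne y 1 with h | h
    · subst h; simp
    · unfold myLazy
      rw [my_convPow_zero, if_neg h]
      ring
  rw [show dirichletE (myLazy φ) f = (1/2) * ∑' x, ∑' y, (f (x*y) - f x) ^ 2 * myLazy φ y from rfl,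
    show dirichletE φ f = (1/2) * ∑' x, ∑' y, (f (x*y) - f x) ^ 2 * φ y from rfl]
  have : ∀ x : G, (∑' y, (f (x*y) - f x) ^ 2 * myLazy φ y)
      = (∑' y, (f (x*y) - f x) ^ 2 * φ y)/2 := by
    intro x
    rw [tsum_congr (hpt x), tsum_div_const]
  rw [tsum_congr this, tsum_div_const]
  ring

lemma my_dirichlet_mono (μ f g : G → ℝ) (hμ0 : ∀ x, 0 ≤ μ x)
    (hinner : ∀ x, Summable fun y => (g (x*y) - g x) ^ 2 * μ y)
    (houter : Summable fun x => ∑' y, (g (x*y) - g x) ^ 2 * μ y)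
    (hpt : ∀ x y, (f (x*y) - f x) ^ 2 ≤ (g (x*y) - g x) ^ 2) :
    dirichletE μ f ≤ dirichletE μ g := by
  have hinf : ∀ x, Summable fun y => (f (x*y) - f x) ^ 2 * μ y := by
    intro x
    refine Summable.of_nonneg_of_le (fun y => mul_nonneg (sq_nonneg _) (hμ0 y))
      (fun y => mul_le_mul_of_nonneg_right (hpt x y) (hμ0 y)) (hinner x)
  have hinle : ∀ x, (∑' y, (f (x*y) - f x) ^ 2 * μ y) ≤ ∑' y, (g (x*y) - g x) ^ 2 * μ y :=
    fun x => Summable.tsum_le_tsum (fun y => mul_le_mul_of_nonneg_right (hpt x y) (hμ0 y)) (hinf x) (hinner x)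
  have houtf : Summable fun x => ∑' y, (f (x*y) - f x) ^ 2 * μ y :=
    Summable.of_nonneg_of_le (fun x => tsum_nonneg fun y => mul_nonneg (sq_nonneg _) (hμ0 y))
      hinle houter
  have := Summable.tsum_le_tsum hinle houtf houter
  rw [show dirichletE μ f = (1/2) * ∑' x, ∑' y, (f (x*y) - f x) ^ 2 * μ y from rfl,
    show dirichletE μ g = (1/2) * ∑' x, ∑' y, (g (x*y) - g x) ^ 2 * μ y from rfl]
  linarith

lemma my_max_lip (a b c : ℝ) : (max (a - c) 0 - max (b - c) 0) ^ 2 ≤ (a - b) ^ 2 := by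
  rcases le_total (a - c) 0 with h | h <;> rcases le_total (b - c) 0 with h' | h' <;>
    rw [show max (a-c) 0 = _ from by first | rw [max_eq_right h] | rw [max_eq_left h]] <;>
    rw [show max (b-c) 0 = _ from by first | rw [max_eq_right h'] | rw [max_eq_left h']] <;>
    nlinarith

lemma my_level_finite (g : G → ℝ) (hgs : Summable g) (c : ℝ) (hc : 0 < c) :
    {x : G | ¬ g x < c}.Finite := by
  have h := hgs.tendsto_cofinite_zero
  have h2 : ∀ᶠ x in Filter.cofinite, g x < c := h.eventually_lt_const hc
  exact Filter.eventually_cofinite.mp h2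

lemma my_card_bound (g : G → ℝ) (hg0 : ∀ x, 0 ≤ g x) (hgs : Summable g)
    (c : ℝ) (hc : 0 < c) (s : Set G) (hsfin : s.Finite) (hsc : ∀ x ∈ s, c ≤ g x) :
    c * (s.ncard : ℝ) ≤ ∑' x, g x := by
  classical
  have hcard : (s.ncard : ℝ) = (hsfin.toFinset.card : ℝ) := by
    rw [Set.ncard_eq_toFinset_card s hsfin]
  calc c * (s.ncard : ℝ) = ∑ _x ∈ hsfin.toFinset, c := by
        rw [Finset.sum_const, nsmul_eq_mul, hcard]; ring
    _ ≤ ∑ x ∈ hsfin.toFinset, g x := by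
        apply Finset.sum_le_sum
        intro x hx
        exact hsc x (hsfin.mem_toFinset.mp hx)
    _ ≤ ∑' x, g x := Summable.sum_le_tsum _ (fun x _ => hg0 x) hgs

lemma my_nash_step (φ : G → ℝ) (hφ : GoodProb φ) (V ε : ℝ) (hV : 0 < V) (hε : 0 < ε)
    (H : ∀ h : G → ℝ, (Function.support h).Finite → ((Function.support h).ncard : ℝ) ≤ V →
      0 < (∑' x, h x ^ 2) → ε * (∑' x, h x ^ 2) < dirichletE φ h)
    (m : ℕ) (hb : 4 / V ≤ convPow (myLazy φ) (2*m) 1) :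
    convPow (myLazy φ) (2*m+2) 1 < (1 - ε/4) * convPow (myLazy φ) (2*m) 1 := by
  classical
  set L := myLazy φ with hLdef
  have hL : GoodProb L := my_lazy_good φ hφ
  set g := convPow L m with hgdef
  obtain ⟨g0, gs, g1⟩ := my_pow_basic L hL m
  have gb := my_pow_le_one L hL m
  have g2 := my_pow_sq_summable L hL m
  have gsym := my_pow_symm L hL m
  set b := convPow L (2*m) 1 with hbdef
  have hbval : b = ∑' x, g x ^ 2 := by
    rw [hbdef, show 2*m = m + m by ring, my_pow_ip L hL m m]
    exact tsum_congr fun y => (sq _).symm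
  have hbpos : 0 < b := lt_of_lt_of_le (by positivity) hb
  set c := b/4 with hcdef
  have hc : 0 < c := by positivity
  set h : G → ℝ := fun x => max (g x - c) 0 with hhdef
  have h0 : ∀ x, 0 ≤ h x := fun x => le_max_right _ _
  have hle : ∀ x, h x ≤ g x := fun x =>
    max_le (by linarith [hc]) (g0 x)
  have hsupp : Function.support h ⊆ {x | ¬ g x < c} := by
    intro x hx
    simp only [Function.mem_support, hhdef] at hx
    have : 0 < g x - c := by
      by_contra hcon
      push_neg at hcon
      exact hx (max_eq_right hcon)
    simp only [Set.mem_setOf_eq]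
    linarith
  have hfin : (Function.support h).Finite :=
    Set.Finite.subset (my_level_finite g gs c hc) hsupp
  have hsummh2 : Summable (fun x => h x ^ 2) := by
    apply summable_of_ne_finset_zero (s := hfin.toFinset)
    intro x hx
    have : h x = 0 := by
      by_contra hcon
      exact hx (hfin.mem_toFinset.mpr hcon)
    rw [this]; ring
  have hcard : ((Function.support h).ncard : ℝ) ≤ V := by
    have hbnd := my_card_bound g g0 gs c hc (Function.support h) hfin
      (fun x hx => by
        have := hsupp hx
        simp only [Set.mem_setOf_eq] at this
        linarith [not_lt.mp this])
    rw [g1] at hbnd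
    -- c * ncard ≤ 1, c = b/4, 4/V ≤ b  ⇒  ncard ≤ 4/b ≤ V
    have hcV : 4 / V ≤ 4 * c / 1 := by rw [hcdef]; linarith
    have hn0 : (0:ℝ) ≤ ((Function.support h).ncard : ℝ) := Nat.cast_nonneg _
    rw [div_le_iff₀ hV] at hb
    -- hb : 4 ≤ b * V
    nlinarith [hbnd, hb, hc, hV]
  -- lower bound on ∑ h²
  have hsq : b - 2*c ≤ ∑' x, h x ^ 2 := by
    have hptw : ∀ x, g x ^ 2 - 2*c*g x ≤ h x ^ 2 := by
      intro x
      rcases le_total (g x) c with hx | hx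
      · have : h x = 0 := max_eq_right (by linarith)
        rw [this]
        nlinarith [g0 x]
      · have : h x = g x - c := max_eq_left (by linarith)
        rw [this]
        nlinarith [sq_nonneg c]
    have hsuml : Summable (fun x => g x ^ 2 - 2*c*g x) := g2.sub (gs.mul_left (2*c))
    calc b - 2*c = ∑' x, (g x ^ 2 - 2*c*g x) := by
          rw [Summable.tsum_sub g2 (gs.mul_left (2*c)), tsum_mul_left, g1, hbval]; ring
      _ ≤ ∑' x, h x ^ 2 := Summable.tsum_le_tsum hptw hsuml hsummh2
  have hsqpos : 0 < ∑' x, h x ^ 2 := by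
    have : b - 2*c = b/2 := by rw [hcdef]; ring
    rw [this] at hsq
    linarith
  -- energy chain
  have henergy := my_energy L g hL g0 gs g2 gb gsym
  have hEg : dirichletE L g = b - convPow L (2*m+1) 1 := by
    have hip : convPow L (2*m+1) 1 = ∑' y, g y * convPow L (m+1) y := by
      rw [show 2*m+1 = m + (m+1) by ring, my_pow_ip L hL m (m+1)]
    rw [henergy.2, ← hbval, hip]
    rfl
  have hinner : ∀ x, Summable fun y => (g (x*y) - g x) ^ 2 * L y := by
    intro x
    refine Summable.of_nonneg_of_le (fun y => mul_nonneg (sq_nonneg _) (hL.1 y))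
      (fun y => ?_) hL.2.1
    have h1 := g0 (x*y); have h2 := gb (x*y); have h3 := g0 x; have h4 := gb x
    have hd : (g (x*y) - g x) ^ 2 ≤ 1 := by
      simp only [hgdef]
      nlinarith
    calc (g (x*y) - g x) ^ 2 * L y ≤ 1 * L y := mul_le_mul_of_nonneg_right hd (hL.1 y)
      _ = L y := one_mul _
  have hEcomp : dirichletE L h ≤ dirichletE L g :=
    my_dirichlet_mono L h g hL.1 hinner henergy.1 (fun x y => my_max_lip (g (x*y)) (g x) c)
  have hhalve := my_dirichlet_halve φ h
  have hH := H h hfin hcard hsqpos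
  have hodd : convPow L (2*m+1) 1 < b - ε * b / 4 := by
    have hc2 : b - 2*c = b/2 := by rw [hcdef]; ring
    rw [hc2] at hsq
    have e1 : dirichletE L h = (1/2) * dirichletE φ h := hhalve
    have e2 : ε * (b/2) ≤ ε * (∑' x, h x ^ 2) :=
      mul_le_mul_of_nonneg_left hsq (le_of_lt hε)
    have e3 : b - convPow L (2*m+1) 1 = dirichletE L g := hEg.symm
    linarith
  have hfinal := my_lazy_even_le_odd φ hφ m
  rw [← hLdef] at hfinal
  have : convPow L (2*m+2) 1 < b - ε * b / 4 := lt_of_le_of_lt hfinal hodd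
  linarith

end Nash
section Binom
variable {G : Type*} [Group G] [Countable G]
set_option linter.unusedSectionVars false
set_option linter.unusedVariables false

lemma my_pascal (n : ℕ) (F : ℕ → ℝ) :
    (∑ k ∈ Finset.range (n+1), (n.choose k : ℝ) * F k)
      + ∑ k ∈ Finset.range (n+1), (n.choose k : ℝ) * F (k+1)
    = ∑ k ∈ Finset.range (n+2), ((n+1).choose k : ℝ) * F k := by
  rw [Finset.sum_range_succ' (fun k => ((n+1).choose k : ℝ) * F k) (n+1)]
  have hps : ∀ k, (((n+1).choose (k+1) : ℕ) : ℝ) = (n.choose k : ℝ) + (n.choose (k+1) : ℝ) := by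
    intro k
    rw [Nat.choose_succ_succ]
    push_cast
    ring
  have e1 : ∑ k ∈ Finset.range (n+1), ((n+1).choose (k+1) : ℝ) * F (k+1)
      = (∑ k ∈ Finset.range (n+1), (n.choose k : ℝ) * F (k+1))
        + ∑ k ∈ Finset.range (n+1), (n.choose (k+1) : ℝ) * F (k+1) := by
    rw [← Finset.sum_add_distrib]
    apply Finset.sum_congr rfl
    intro k _
    rw [hps k]
    ring
  have e2 : (∑ k ∈ Finset.range (n+1), (n.choose (k+1) : ℝ) * F (k+1))
      + ((n+1).choose 0 : ℝ) * F 0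
      = ∑ k ∈ Finset.range (n+1), (n.choose k : ℝ) * F k := by
    have := Finset.sum_range_succ' (fun k => (n.choose k : ℝ) * F k) (n+1)
    -- ∑_{k<n+2} C(n,k) F k = ∑_{k<n+1} C(n,k+1)F(k+1) + C(n,0) F 0
    have h2 : ∑ k ∈ Finset.range (n+2), (n.choose k : ℝ) * F k
        = ∑ k ∈ Finset.range (n+1), (n.choose k : ℝ) * F k := by
      rw [Finset.sum_range_succ]
      rw [Nat.choose_succ_self]
      push_cast
      ring
    rw [← h2, this]
    simp
  simp only [e1]
  simp only [Nat.choose_zero_right, Nat.cast_one, one_mul] at e2 ⊢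
  linarith [e2]

lemma my_binom (φ : G → ℝ) (hφ : GoodProb φ) (n : ℕ) (x : G) :
    convPow (myLazy φ) n x
      = (2:ℝ)⁻¹^n * ∑ k ∈ Finset.range (n+1), (n.choose k : ℝ) * convPow φ k x := by
  induction n generalizing x with
  | zero =>
    simp only [pow_zero, one_mul, Finset.range_one, Finset.sum_singleton, Nat.choose_self]
    rw [show convPow (myLazy φ) 0 = convPow φ 0 from rfl]
    norm_num
  | succ n ih =>
    have hL : GoodProb (myLazy φ) := my_lazy_good φ hφ
    obtain ⟨p0, ps, p1⟩ := my_pow_basic (myLazy φ) hL n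
    have pb := my_pow_le_one (myLazy φ) hL n
    have hconv : convPow (myLazy φ) (n+1) x
        = (convPow (myLazy φ) n x + convolve φ (convPow (myLazy φ) n) x) / 2 := by
      rw [show convPow (myLazy φ) (n+1) = convolve (myLazy φ) (convPow (myLazy φ) n) from rfl]
      exact my_lazy_conv φ (convPow (myLazy φ) n) hφ p0 1 pb x
    have hdist : convolve φ (convPow (myLazy φ) n) x
        = (2:ℝ)⁻¹^n * ∑ k ∈ Finset.range (n+1), (n.choose k : ℝ) * convPow φ (k+1) x := by
      have hptw : ∀ y : G, φ y * convPow (myLazy φ) n (y⁻¹ * x)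
          = ∑ k ∈ Finset.range (n+1),
              ((2:ℝ)⁻¹^n * (n.choose k : ℝ)) * (φ y * convPow φ k (y⁻¹ * x)) := by
        intro y
        rw [ih (y⁻¹ * x), Finset.mul_sum, Finset.mul_sum]
        apply Finset.sum_congr rfl
        intro k _
        ring
      have hsummand : ∀ k ∈ Finset.range (n+1), Summable (fun y : G =>
          ((2:ℝ)⁻¹^n * (n.choose k : ℝ)) * (φ y * convPow φ k (y⁻¹ * x))) := by
        intro k _
        exact (my_conv_slice_summable φ (convPow φ k) hφ.2.1 (my_pow_basic φ hφ k).1 1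
          (my_pow_le_one φ hφ k) x).mul_left _
      calc convolve φ (convPow (myLazy φ) n) x
          = ∑' y, ∑ k ∈ Finset.range (n+1),
              ((2:ℝ)⁻¹^n * (n.choose k : ℝ)) * (φ y * convPow φ k (y⁻¹ * x)) :=
            tsum_congr hptw
        _ = ∑ k ∈ Finset.range (n+1), ∑' y : G,
              ((2:ℝ)⁻¹^n * (n.choose k : ℝ)) * (φ y * convPow φ k (y⁻¹ * x)) :=
            Summable.tsum_finsetSum hsummand
        _ = (2:ℝ)⁻¹^n * ∑ k ∈ Finset.range (n+1), (n.choose k : ℝ) * convPow φ (k+1) x := by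
            rw [Finset.mul_sum]
            apply Finset.sum_congr rfl
            intro k _
            rw [tsum_mul_left, show (∑' y, φ y * convPow φ k (y⁻¹ * x)) = convPow φ (k+1) x from rfl]
            ring
    rw [hconv, ih x, hdist]
    rw [show ((2:ℝ)⁻¹^n * ∑ k ∈ Finset.range (n+1), (n.choose k : ℝ) * convPow φ k x
          + (2:ℝ)⁻¹^n * ∑ k ∈ Finset.range (n+1), (n.choose k : ℝ) * convPow φ (k+1) x) / 2
        = (2:ℝ)⁻¹^(n+1) * ((∑ k ∈ Finset.range (n+1), (n.choose k : ℝ) * convPow φ k x)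
          + ∑ k ∈ Finset.range (n+1), (n.choose k : ℝ) * convPow φ (k+1) x) from by ring]
    rw [my_pascal n (fun k => convPow φ k x)]

lemma my_lazy_lower (φ : G → ℝ) (hφ : GoodProb φ) (N : ℕ) :
    convPow φ (2*N) 1 / 2 ≤ convPow (myLazy φ) (2*N) 1 := by
  classical
  have hbin := my_binom φ hφ (2*N) 1
  set a : ℕ → ℝ := fun k => convPow φ k 1 with hadef
  have ha0 : ∀ k, 0 ≤ a k := fun k => (my_pow_basic φ hφ k).1 1
  have haeven : ∀ j, j ≤ N → a (2*N) ≤ a (2*j) := fun j hj => my_b_even_mono φ hφ hj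
  -- pointwise bound with weights
  have hptw : ∀ k ∈ Finset.range (2*N+1),
      ((2*N).choose k : ℝ) * ((1 + (-1:ℝ)^k)/2) * a (2*N) ≤ ((2*N).choose k : ℝ) * a k := by
    intro k hk
    rcases Nat.even_or_odd k with he | ho
    · obtain ⟨j, hj⟩ := he
      have hjN : j ≤ N := by
        simp only [Finset.mem_range] at hk
        omega
    -- (−1)^k = 1
      have : (-1:ℝ)^k = 1 := by
        rw [hj, show j + j = 2*j by ring, pow_mul]
        norm_num
      rw [this]
      have := haeven j hjN
      have hknn : (0:ℝ) ≤ ((2*N).choose k : ℝ) := Nat.cast_nonneg _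
      have hkj : a (2*j) = a k := by rw [hj, show j + j = 2*j by ring]
      nlinarith
    · have : (-1:ℝ)^k = -1 := ho.neg_one_pow
      rw [this]
      have hknn : (0:ℝ) ≤ ((2*N).choose k : ℝ) := Nat.cast_nonneg _
      have := ha0 k
      nlinarith
  have hsum := Finset.sum_le_sum hptw
  -- compute the weighted binomial sum
  have hA : ∑ k ∈ Finset.range (2*N+1), (((2*N).choose k : ℕ) : ℝ) = 2^(2*N) := by
    exact_mod_cast Nat.sum_range_choose (2*N)
  have hB : ∑ k ∈ Finset.range (2*N+1), (-1:ℝ)^k * (((2*N).choose k : ℕ) : ℝ)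
      = if 2*N = 0 then 1 else 0 := by
    have h := Int.alternating_sum_range_choose (n := 2*N)
    have h2 := congrArg (fun z : ℤ => (z : ℝ)) h
    push_cast at h2
    rw [h2]
  have hW : ∑ k ∈ Finset.range (2*N+1), ((2*N).choose k : ℝ) * ((1 + (-1:ℝ)^k)/2)
      = (2^(2*N) + (if 2*N = 0 then (1:ℝ) else 0)) / 2 := by
    have : ∀ k, ((2*N).choose k : ℝ) * ((1 + (-1:ℝ)^k)/2)
        = (((2*N).choose k : ℝ) + (-1:ℝ)^k * ((2*N).choose k : ℝ)) / 2 := by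
      intro k; ring
    rw [Finset.sum_congr rfl (fun k _ => this k)]
    rw [← Finset.sum_div, Finset.sum_add_distrib, hA, hB]
  -- assemble
  have hlhs : ∑ k ∈ Finset.range (2*N+1), ((2*N).choose k : ℝ) * ((1 + (-1:ℝ)^k)/2) * a (2*N)
      = ((2^(2*N) + (if 2*N = 0 then (1:ℝ) else 0)) / 2) * a (2*N) := by
    rw [← Finset.sum_mul, hW]
  rw [hbin]
  have h2 : (0:ℝ) < 2^(2*N) := by positivity
  have hfin : (2:ℝ)⁻¹^(2*N) * ∑ k ∈ Finset.range (2*N+1), ((2*N).choose k : ℝ) * a k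
      ≥ (2:ℝ)⁻¹^(2*N) * (((2^(2*N) + (if 2*N = 0 then (1:ℝ) else 0)) / 2) * a (2*N)) := by
    apply mul_le_mul_of_nonneg_left _ (by positivity)
    rw [← hlhs]
    exact hsum
  have hpow : (2:ℝ)⁻¹^(2*N) * (2:ℝ)^(2*N) = 1 := by
    rw [← mul_pow]
    norm_num
  have hsplit : (2:ℝ)⁻¹^(2*N) * (((2^(2*N) + (if 2*N = 0 then (1:ℝ) else 0)) / 2) * a (2*N))
      ≥ a (2*N) / 2 := by
    have hite : (0:ℝ) ≤ (if 2*N = 0 then (1:ℝ) else 0) := by split_ifs <;> norm_num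
    have hp : (0:ℝ) < (2:ℝ)⁻¹^(2*N) := by positivity
    have ha := ha0 (2*N)
    have e : (2:ℝ)⁻¹^(2*N) * (((2^(2*N) + (if 2*N = 0 then (1:ℝ) else 0)) / 2) * a (2*N))
        = ((2:ℝ)⁻¹^(2*N) * (2:ℝ)^(2*N)) * a (2*N) / 2
          + ((2:ℝ)⁻¹^(2*N) * (if 2*N = 0 then (1:ℝ) else 0) * a (2*N)) / 2 := by ring
    rw [hpow] at e
    rw [ge_iff_le, e]
    have hnn : 0 ≤ (2:ℝ)⁻¹^(2*N) * (if 2*N = 0 then (1:ℝ) else 0) * a (2*N) :=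
      mul_nonneg (mul_nonneg hp.le hite) ha
    linarith
  calc convPow φ (2*N) 1 / 2 = a (2*N) / 2 := rfl
    _ ≤ _ := le_trans hsplit hfin
  
end Binom
section Final
variable {G : Type*} [Group G] [Countable G]
set_option linter.unusedSectionVars false
set_option linter.unusedVariables false

lemma my_dirichletE_nonneg (μ f : G → ℝ) (hμ0 : ∀ x, 0 ≤ μ x) : 0 ≤ dirichletE μ f :=
  mul_nonneg (by norm_num)
    (tsum_nonneg fun x => tsum_nonneg fun y => mul_nonneg (sq_nonneg _) (hμ0 y))

lemma my_dirac_facts (φ : G → ℝ) :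
    Function.support (convPow φ 0) = {(1:G)} ∧ (∑' x, convPow φ 0 x ^ 2) = 1 := by
  classical
  constructor
  · ext x
    simp only [Function.mem_support, Set.mem_singleton_iff]
    rw [my_convPow_zero]
    split_ifs with h <;> simp [h]
  · have : ∀ x : G, convPow φ 0 x ^ 2 = convPow φ 0 x := by
      intro x
      rw [my_convPow_zero]
      split_ifs <;> norm_num
    rw [tsum_congr this, my_dirac_mass]

lemma my_dirac_energy_le (φ : G → ℝ) (hφ : GoodProb φ) :
    dirichletE φ (convPow φ 0) ≤ 1 := by
  classical
  obtain ⟨h0, hs, h1, hsym⟩ := hφ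
  set d := convPow φ 0 with hd
  have d0 : ∀ x, 0 ≤ d x := by
    intro x; rw [hd, my_convPow_zero]; split_ifs <;> norm_num
  have db : ∀ x, d x ≤ 1 := by
    intro x; rw [hd, my_convPow_zero]; split_ifs <;> norm_num
  have hd1 : d 1 = 1 := by rw [hd, my_convPow_zero]; simp
  have hsingle : ∀ x : G, ∀ y ≠ x⁻¹, d (x*y) * φ y = 0 := by
    intro x y hy
    have : x * y ≠ 1 := by
      intro h
      exact hy ((mul_eq_one_iff_inv_eq.mp h).symm)
    rw [hd, my_convPow_zero, if_neg this]
    ring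
  have hsin : ∀ x, Summable (fun y => d (x*y) * φ y) := by
    intro x
    apply summable_of_ne_finset_zero (s := {x⁻¹})
    intro y hy
    exact hsingle x y (by simpa using hy)
  have hinner : ∀ x : G, (∑' y, (d (x*y) - d x) ^ 2 * φ y) ≤ φ x⁻¹ + d x := by
    intro x
    have hsl : Summable (fun y => (d (x*y) - d x) ^ 2 * φ y) := by
      refine Summable.of_nonneg_of_le (fun y => mul_nonneg (sq_nonneg _) (h0 y)) (fun y => ?_) hs
      have e1 := d0 (x*y); have e2 := db (x*y); have e3 := d0 x; have e4 := db x
      have hdd : (d (x*y) - d x) ^ 2 ≤ 1 := by nlinarith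
      calc (d (x*y) - d x) ^ 2 * φ y ≤ 1 * φ y := mul_le_mul_of_nonneg_right hdd (h0 y)
        _ = φ y := one_mul _
    have hrhs : Summable (fun y => d (x*y) * φ y + d x * φ y) :=
      (hsin x).add (hs.mul_left (d x))
    have hptw : ∀ y, (d (x*y) - d x) ^ 2 * φ y ≤ d (x*y) * φ y + d x * φ y := by
      intro y
      have e1 := d0 (x*y); have e2 := db (x*y); have e3 := d0 x; have e4 := db x
      have hdd : (d (x*y) - d x) ^ 2 ≤ d (x*y) + d x := by nlinarith
      calc (d (x*y) - d x) ^ 2 * φ y ≤ (d (x*y) + d x) * φ y :=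
            mul_le_mul_of_nonneg_right hdd (h0 y)
        _ = d (x*y) * φ y + d x * φ y := by ring
    calc (∑' y, (d (x*y) - d x) ^ 2 * φ y) ≤ ∑' y, (d (x*y) * φ y + d x * φ y) :=
          Summable.tsum_le_tsum hptw hsl hrhs
      _ = (∑' y, d (x*y) * φ y) + d x * ∑' y, φ y := by
          rw [Summable.tsum_add (hsin x) (hs.mul_left (d x)), tsum_mul_left]
      _ = φ x⁻¹ + d x := by
          rw [tsum_eq_single x⁻¹ (hsingle x), h1, mul_one]
          rw [show x * x⁻¹ = 1 from mul_inv_cancel x, hd1, one_mul]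
  have hφinv : Summable (fun x : G => φ x⁻¹) := by
    simpa [Function.comp_def] using ((Equiv.inv G).summable_iff (f := φ)).mpr hs
  have hout : Summable (fun x : G => φ x⁻¹ + d x) := hφinv.add (my_dirac_summable φ)
  have hsl2 : Summable (fun x : G => ∑' y, (d (x*y) - d x) ^ 2 * φ y) := by
    refine Summable.of_nonneg_of_le
      (fun x => tsum_nonneg fun y => mul_nonneg (sq_nonneg _) (h0 y)) hinner hout
  have houtval : (∑' x : G, (φ x⁻¹ + d x)) = 2 := by
    have hiv : (∑' b : G, φ b⁻¹) = ∑' b, φ b := by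
      simpa using (Equiv.inv G).tsum_eq φ
    rw [Summable.tsum_add hφinv (my_dirac_summable φ), hiv, h1, my_dirac_mass φ]
    norm_num
  have : (∑' x, ∑' y, (d (x*y) - d x) ^ 2 * φ y) ≤ 2 := by
    rw [← houtval]
    exact Summable.tsum_le_tsum hinner hsl2 hout
  rw [show dirichletE φ d = (1/2) * ∑' x, ∑' y, (d (x*y) - d x) ^ 2 * φ y from rfl]
  linarith

lemma my_scale (φ h : G → ℝ) (hpos : 0 < ∑' x, h x ^ 2) :
    ∃ f : G → ℝ, Function.support f = Function.support h ∧ (∑' x, f x ^ 2) = 1 ∧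
      dirichletE φ f = dirichletE φ h / (∑' x, h x ^ 2) := by
  set s := Real.sqrt (∑' x, h x ^ 2) with hsdef
  have hs0 : 0 < s := Real.sqrt_pos.mpr hpos
  have hs2 : s ^ 2 = ∑' x, h x ^ 2 := Real.sq_sqrt hpos.le
  refine ⟨fun x => h x / s, ?_, ?_, ?_⟩
  · ext x
    simp only [Function.mem_support]
    constructor
    · intro hx hc; exact hx (by rw [hc]; simp)
    · intro hx hc
      exact hx (by field_simp at hc; simpa using hc)
  · have : ∀ x, (h x / s) ^ 2 = h x ^ 2 / s ^ 2 := fun x => div_pow _ _ _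
    rw [tsum_congr this, tsum_div_const, hs2, div_self hpos.ne']
  · have hptw : ∀ x y : G, ((h (x*y) / s) - (h x / s)) ^ 2 * φ y
        = ((h (x*y) - h x) ^ 2 * φ y) / s ^ 2 := by
      intro x y
      field_simp
    have hin : ∀ x : G, (∑' y, ((h (x*y) / s) - (h x / s)) ^ 2 * φ y)
        = (∑' y, (h (x*y) - h x) ^ 2 * φ y) / s ^ 2 := by
      intro x
      rw [tsum_congr (hptw x), tsum_div_const]
    rw [show dirichletE φ (fun x => h x / s)
        = (1/2) * ∑' x, ∑' y, ((h (x*y) / s) - (h x / s)) ^ 2 * φ y from rfl,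
      tsum_congr hin, tsum_div_const, ← hs2,
      show dirichletE φ h = (1/2) * ∑' x, ∑' y, (h (x*y) - h x) ^ 2 * φ y from rfl]
    ring

end Final

set_option maxHeartbeats 1000000 in
/-- If `φ^{(n)}(e) ≥ exp(−n/π(n))` for an increasing `π : (0,∞) → (0,∞)` with
`π(t) ≤ c·t`, then there is `A > 0` with `Λ_φ(exp(A·n/π(n))) ≤ A/(2π(n))` for all `n`. -/
theorem specProfile_upper_from_return {G : Type*} [Group G] [Countable G]
    (φ : G → ℝ) (hφ : IsSymProb φ)
    (π : ℝ → ℝ) (hπpos : ∀ t > (0:ℝ), 0 < π t) (hπmono : MonotoneOn π (Set.Ioi 0))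
    (c : ℝ) (hc : 0 < c) (hπlin : ∀ t > (0:ℝ), π t ≤ c * t)
    (hret : ∀ n : ℕ, 1 ≤ n → Real.exp (-((n : ℝ) / π n)) ≤ convPow φ n 1) :
    ∃ A > (0:ℝ), ∀ n : ℕ, 1 ≤ n →
      specProfile φ (Real.exp (A * n / π n)) ≤ A / (2 * π n) := by
  classical
  have hφg : GoodProb φ := my_symProb_good φ hφ
  refine ⟨8*c+17, by linarith, ?_⟩
  intro N hN
  have hNpos : (0:ℝ) < (N:ℝ) := by
    have : 0 < N := hN
    exact_mod_cast this
  have hπN : 0 < π N := hπpos _ hNpos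
  set A : ℝ := 8*c+17 with hAdef
  have hA : 0 < A := by rw [hAdef]; linarith
  set V : ℝ := Real.exp (A * N / π N) with hVdef
  have hV0 : 0 < V := Real.exp_pos _
  have hexpnn : 0 ≤ A * N / π N := by positivity
  have hV1 : (1:ℝ) ≤ V := by
    rw [hVdef, show (1:ℝ) = Real.exp 0 from (Real.exp_zero).symm]
    exact Real.exp_le_exp.mpr hexpnn
  set ε : ℝ := A / (2 * π N) with hεdef
  have hε : 0 < ε := by rw [hεdef]; positivity
  set S : Set ℝ := {E : ℝ | ∃ f : G → ℝ, (Function.support f).Finite ∧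
    ((Function.support f).ncard : ℝ) ≤ V ∧ (∑' x, (f x) ^ 2) = 1 ∧ E = dirichletE φ f}
    with hSdef
  have hSspec : specProfile φ V = sInf S := rfl
  have hbdd : BddBelow S := by
    refine ⟨0, fun E hE => ?_⟩
    obtain ⟨f, _, _, _, hEf⟩ := hE
    rw [hEf]
    exact my_dirichletE_nonneg φ f hφg.1
  obtain ⟨hdsupp, hdsq⟩ := my_dirac_facts (G := G) φ
  have hdmem : dirichletE φ (convPow φ 0) ∈ S := by
    refine ⟨convPow φ 0, ?_, ?_, hdsq, rfl⟩
    · rw [hdsupp]; exact Set.finite_singleton _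
    · rw [hdsupp, Set.ncard_singleton]
      exact_mod_cast hV1
  have hspec_le_one : specProfile φ V ≤ 1 := by
    rw [hSspec]
    exact le_trans (csInf_le hbdd hdmem) (my_dirac_energy_le φ hφg)
  by_cases hbig : 1 ≤ ε
  · exact le_trans hspec_le_one hbig
  push_neg at hbig
  by_contra hcon
  push_neg at hcon
  have H : ∀ h : G → ℝ, (Function.support h).Finite →
      ((Function.support h).ncard : ℝ) ≤ V → 0 < (∑' x, h x ^ 2) →
      ε * (∑' x, h x ^ 2) < dirichletE φ h := by
    intro h hfin hcard hpos
    obtain ⟨f, hfsupp, hfnorm, hfE⟩ := my_scale φ h hpos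
    have hmem : dirichletE φ f ∈ S :=
      ⟨f, by rw [hfsupp]; exact hfin, by rw [hfsupp]; exact hcard, hfnorm, rfl⟩
    have h1 : ε < dirichletE φ f := lt_of_lt_of_le hcon (csInf_le hbdd hmem)
    rw [hfE, lt_div_iff₀ hpos] at h1
    linarith
  set L := myLazy φ with hLdef
  have hLg : GoodProb L := my_lazy_good φ hφg
  have hiter : ∀ m : ℕ, convPow L (2*m) 1 < 4/V ∨ convPow L (2*m) 1 ≤ (1 - ε/4)^m := by
    intro m
    induction m with
    | zero =>
      right
      have h1 : convPow L (2*0) 1 = 1 := by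
        rw [show 2*0 = 0 from rfl, my_convPow_zero]
        simp
      rw [h1, pow_zero]
    | succ m ih =>
      have hstep_le : convPow L (2*(m+1)) 1 ≤ convPow L (2*m) 1 := my_b_even_succ L hLg m
      rcases ih with hlt | hle
      · exact Or.inl (lt_of_le_of_lt hstep_le hlt)
      · by_cases hb : 4/V ≤ convPow L (2*m) 1
        · right
          have hst := my_nash_step φ hφg V ε hV0 hε H m hb
          have h14 : (0:ℝ) ≤ 1 - ε/4 := by linarith
          calc convPow L (2*(m+1)) 1 = convPow L (2*m+2) 1 := by
                rw [show 2*(m+1) = 2*m+2 from by ring]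
            _ ≤ (1 - ε/4) * convPow L (2*m) 1 := le_of_lt hst
            _ ≤ (1 - ε/4) * (1 - ε/4)^m := mul_le_mul_of_nonneg_left hle h14
            _ = (1 - ε/4)^(m+1) := by rw [pow_succ]; ring
        · push_neg at hb
          exact Or.inl (lt_of_le_of_lt hstep_le hb)
  have h2N : (1:ℕ) ≤ 2*N := by omega
  have hret2N := hret (2*N) h2N
  have hcast : ((2*N : ℕ) : ℝ) = 2*(N:ℝ) := by push_cast; ring
  have hπ2N : 0 < π (2*(N:ℝ)) := hπpos _ (by linarith)
  have hmono : π (N:ℝ) ≤ π (2*(N:ℝ)) :=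
    hπmono (Set.mem_Ioi.mpr hNpos) (Set.mem_Ioi.mpr (by linarith)) (by linarith)
  have hexp_mono : Real.exp (-(2*(N:ℝ)/π (N:ℝ))) ≤ Real.exp (-(2*(N:ℝ)/π (2*(N:ℝ)))) := by
    apply Real.exp_le_exp.mpr
    have hdd : 2*(N:ℝ)/π (2*(N:ℝ)) ≤ 2*(N:ℝ)/π (N:ℝ) := by
      rw [div_le_div_iff₀ hπ2N hπN]
      nlinarith [hmono, hNpos, hπN]
    linarith
  have ha2N : Real.exp (-(2*(N:ℝ)/π (N:ℝ))) ≤ convPow φ (2*N) 1 := by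
    rw [hcast] at hret2N
    exact le_trans hexp_mono hret2N
  have hblow : Real.exp (-(2*(N:ℝ)/π (N:ℝ))) / 2 ≤ convPow L (2*N) 1 := by
    have h2 : convPow φ (2*N) 1 / 2 ≤ convPow L (2*N) 1 := my_lazy_lower φ hφg N
    linarith
  set t : ℝ := (N:ℝ)/π N with htdef
  have ht : 0 < t := by rw [htdef]; positivity
  have htc : 1/c ≤ t := by
    rw [htdef, div_le_div_iff₀ hc hπN]
    have := hπlin N hNpos
    linarith
  have h8e : (8:ℝ) < Real.exp 3 := by
    have he := Real.exp_one_gt_d9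
    have h3 : Real.exp 3 = Real.exp 1 ^ 3 := by
      rw [show (3:ℝ) = ((3:ℕ):ℝ) from by norm_num, ← Real.exp_one_pow]
    have h27 : (2.7:ℝ) < Real.exp 1 := by linarith
    have : (8:ℝ) < (2.7:ℝ)^3 := by norm_num
    calc (8:ℝ) < (2.7:ℝ)^3 := this
      _ < Real.exp 1 ^ 3 := by
          apply pow_lt_pow_left₀ h27 (by norm_num)
          norm_num
      _ = Real.exp 3 := h3.symm
  have h2e : (2:ℝ) < Real.exp 1 := by
    have he := Real.exp_one_gt_d9
    linarith
  rcases hiter N with hlt | hle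
  all_goals clear hiter H hbdd hdmem hSspec hspec_le_one hdsupp hdsq hcon hret hret2N ha2N hexp_mono hmono hπ2N hcast h2N
  · -- case 1 : b(2N) < 4/V
    have h4V : (4:ℝ)/V = 4 * Real.exp (-(A*(N:ℝ)/π N)) := by
      rw [hVdef, Real.exp_neg]
      ring
    have e1 : Real.exp (-(2*t)) / 2 < 4 * Real.exp (-(A*t)) := by
      have e2 : -(2*(N:ℝ)/π N) = -(2*t) := by rw [htdef]; ring
      have e3 : -(A*(N:ℝ)/π N) = -(A*t) := by rw [htdef]; ring
      have := lt_of_le_of_lt hblow hlt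
      rw [h4V, e2, e3] at this
      exact this
    have hkey : Real.exp (-(2*t)) < Real.exp (3 + -(A*t)) := by
      calc Real.exp (-(2*t)) < 8 * Real.exp (-(A*t)) := by linarith [Real.exp_pos (-(A*t))]
        _ < Real.exp 3 * Real.exp (-(A*t)) :=
            mul_lt_mul_of_pos_right h8e (Real.exp_pos _)
        _ = Real.exp (3 + -(A*t)) := (Real.exp_add _ _).symm
    have hlog : -(2*t) < 3 + -(A*t) := Real.exp_lt_exp.mp hkey
    have hAt : (A-2)*t < 3 := by nlinarith [hlog]
    have hA2 : 0 < A - 2 := by rw [hAdef]; linarith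
    have hgc : (A-2)*(1/c) ≤ (A-2)*t := mul_le_mul_of_nonneg_left htc hA2.le
    have : (A-2)*(1/c) < 3 := lt_of_le_of_lt hgc hAt
    have hfin : A - 2 < 3*c := by
      rw [show (A-2)*(1/c) = (A-2)/c from by ring] at this
      rw [div_lt_iff₀ hc] at this
      linarith
    rw [hAdef] at hfin
    linarith
  · -- case 2 : b(2N) ≤ (1−ε/4)^N
    have hstep1 : (1 - ε/4)^N ≤ Real.exp (-(ε/4))^N := by
      apply pow_le_pow_left₀ (by linarith)
      have := Real.add_one_le_exp (-(ε/4))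
      linarith
    have hstep2 : Real.exp (-(ε/4))^N = Real.exp ((N:ℝ) * (-(ε/4))) := by
      rw [Real.exp_nat_mul]
    have hNe : (N:ℝ) * (ε/4) = (A/8)*t := by
      rw [hεdef, htdef]
      field_simp
      ring
    have e3 : (N:ℝ) * (-(ε/4)) = -((A/8)*t) := by rw [← hNe]; ring
    have hstep3 : (1 - ε/4)^N ≤ Real.exp (-((A/8)*t)) := by
      rw [← e3, ← hstep2]
      exact hstep1
    have e1 : Real.exp (-(2*t)) / 2 ≤ Real.exp (-((A/8)*t)) := by
      have e2 : -(2*(N:ℝ)/π N) = -(2*t) := by rw [htdef]; ring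
      have chain := le_trans hblow (le_trans hle hstep3)
      rw [e2] at chain
      exact chain
    have hkey : Real.exp (-(2*t)) < Real.exp (1 + -((A/8)*t)) := by
      calc Real.exp (-(2*t)) ≤ 2 * Real.exp (-((A/8)*t)) := by linarith [Real.exp_pos (-((A/8)*t))]
        _ < Real.exp 1 * Real.exp (-((A/8)*t)) :=
            mul_lt_mul_of_pos_right h2e (Real.exp_pos _)
        _ = Real.exp (1 + -((A/8)*t)) := (Real.exp_add _ _).symm
    have hlog : -(2*t) < 1 + -((A/8)*t) := Real.exp_lt_exp.mp hkey
    have hAt : (A/8-2)*t < 1 := by nlinarith [hlog]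
    have hA2 : 0 < A/8 - 2 := by rw [hAdef]; linarith
    have hgc : (A/8-2)*(1/c) ≤ (A/8-2)*t := mul_le_mul_of_nonneg_left htc hA2.le
    have : (A/8-2)*(1/c) < 1 := lt_of_le_of_lt hgc hAt
    have hfin : A/8 - 2 < c := by
      rw [show (A/8-2)*(1/c) = (A/8-2)/c from by ring] at this
      rw [div_lt_iff₀ hc] at this
      linarith
    rw [hAdef] at hfin
    linarith
end
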